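/- arXiv:1310.8533 — 3 statements merged into one kernel-verified Lean document; each statement's English description precedes it below -/
import Mathlib

section
/- For integers k ≥ 2, l ≥ 1 and d ≥ 1, the algebraic connectivity satisfies α(T(k,l,d)) > α(T(k−1,l,d+1)). -/
/-- The algebraic connectivity of a graph: the second smallest Laplacian eigenvalue,
realized as the minimum of the Rayleigh quotient over unit vectors orthogonal to the
all-ones vector. -/
noncomputable def algConn {V : Type*} [Fintype V] [DecidableEq V] (G : SimpleGraph V) : ℝ :=
  letI := Classical.decRel G.Adj
  sInf { r : ℝ | ∃ x : V → ℝ, (∑ v, x v) = 0 ∧ (∑ v, (x v) ^ 2) = 1 ∧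
      r = dotProduct x ((G.lapMatrix ℝ).mulVec x) }

/-- A Fiedler vector: an eigenvector of the Laplacian matrix for the eigenvalue `algConn G`. -/
noncomputable def IsFiedlerVector {V : Type*} [Fintype V] [DecidableEq V]
    (G : SimpleGraph V) (x : V → ℝ) : Prop :=
  letI := Classical.decRel G.Adj
  x ≠ 0 ∧ (G.lapMatrix ℝ).mulVec x = algConn G • x

/-- The domination number: the minimum size of a set `S` of vertices such that every
vertex outside `S` has a neighbor in `S`. -/
noncomputable def dominationNumber {V : Type*} [Fintype V] (G : SimpleGraph V) : ℕ :=
  sInf { k : ℕ | ∃ S : Finset V, S.card = k ∧ ∀ v ∉ S, ∃ u ∈ S, G.Adj u v }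

/-- The tree `T(k,l,d)`: a path on `d` vertices `0, …, d-1` with `k` pendant vertices
attached at vertex `0` and `l` pendant vertices attached at vertex `d-1`. -/
def Tkld (k l d : ℕ) : SimpleGraph (Fin k ⊕ Fin d ⊕ Fin l) where
  Adj a b :=
    match a, b with
    | Sum.inl _, Sum.inr (Sum.inl j) => j.1 = 0
    | Sum.inr (Sum.inl j), Sum.inl _ => j.1 = 0
    | Sum.inr (Sum.inl i), Sum.inr (Sum.inl j) => i.1 + 1 = j.1 ∨ j.1 + 1 = i.1
    | Sum.inr (Sum.inl j), Sum.inr (Sum.inr _) => j.1 + 1 = d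
    | Sum.inr (Sum.inr _), Sum.inr (Sum.inl j) => j.1 + 1 = d
    | _, _ => False
  symm := by
    constructor
    rintro (a | b | c) (a' | b' | c') h <;> simp_all <;> tauto
  loopless := by
    constructor
    rintro (a | b | c) h <;> simp_all

/-- The coalescence `G₁(v) ◇ G₂(u)`: identify the vertex `v` of `G₁` with the vertex `u`
of `G₂` (the identified vertex is represented by `Sum.inl v`). -/
def coalesce {V₁ V₂ : Type*} (G₁ : SimpleGraph V₁) (G₂ : SimpleGraph V₂)
    (v : V₁) (u : V₂) : SimpleGraph (V₁ ⊕ {w : V₂ // w ≠ u}) where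
  Adj a b :=
    match a, b with
    | Sum.inl a, Sum.inl b => G₁.Adj a b
    | Sum.inl a, Sum.inr b => a = v ∧ G₂.Adj u b.1
    | Sum.inr a, Sum.inl b => b = v ∧ G₂.Adj u a.1
    | Sum.inr a, Sum.inr b => G₂.Adj a.1 b.1
  symm := by
    constructor
    rintro (a | a) (b | b) h <;> simp_all [SimpleGraph.adj_comm]
  loopless := by
    constructor
    rintro (a | a) h <;> simp_all

open Finset Matrix

variable {V : Type*} [Fintype V] [DecidableEq V]

/-- The Laplacian quadratic form. -/
noncomputable def lapQ (G : SimpleGraph V) (x : V → ℝ) : ℝ :=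
  letI := Classical.decRel G.Adj
  dotProduct x ((G.lapMatrix ℝ).mulVec x)

noncomputable def lapSet (G : SimpleGraph V) : Set ℝ :=
  { r : ℝ | ∃ x : V → ℝ, (∑ v, x v) = 0 ∧ (∑ v, (x v) ^ 2) = 1 ∧ r = lapQ G x }

lemma algConn_eq (G : SimpleGraph V) : algConn G = sInf (lapSet G) := rfl

lemma lapQ_eq_sum (G : SimpleGraph V) [inst : DecidableRel G.Adj] (x : V → ℝ) :
    lapQ G x = (∑ i : V, ∑ j : V, if G.Adj i j then (x i - x j)^2 else 0) / 2 := by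
  rw [lapQ, ← Matrix.toLinearMap₂'_apply', SimpleGraph.lapMatrix_toLinearMap₂']
  congr!

lemma lapQ_nonneg (G : SimpleGraph V) (x : V → ℝ) : 0 ≤ lapQ G x := by
  classical
  rw [lapQ_eq_sum]
  positivity

lemma lapQ_smul (G : SimpleGraph V) (c : ℝ) (x : V → ℝ) :
    lapQ G (c • x) = c^2 * lapQ G x := by
  classical
  rw [lapQ_eq_sum, lapQ_eq_sum]
  have h : ∀ i j : V, ((c • x) i - (c • x) j)^2 = c^2 * (x i - x j)^2 := by
    intro i j; simp only [Pi.smul_apply, smul_eq_mul]; ring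
  have h2 : ∀ (P : Prop) [Decidable P] (a : ℝ), (if P then c^2 * a else 0) = c^2 * (if P then a else 0) := by
    intro P _ a; split <;> simp
  simp_rw [h, h2, ← Finset.mul_sum]
  ring

lemma bddBelow_lapSet (G : SimpleGraph V) : BddBelow (lapSet G) := by
  refine ⟨0, fun r hr => ?_⟩
  obtain ⟨x, -, -, rfl⟩ := hr
  exact lapQ_nonneg G x

lemma algConn_le (G : SimpleGraph V) (x : V → ℝ) (h0 : (∑ v, x v) = 0)
    (h1 : (∑ v, (x v) ^ 2) = 1) : algConn G ≤ lapQ G x :=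
  csInf_le (bddBelow_lapSet G) ⟨x, h0, h1, rfl⟩

lemma algConn_le' (G : SimpleGraph V) (x : V → ℝ) (h0 : (∑ v, x v) = 0)
    (h1 : (∑ v, (x v) ^ 2) ≠ 0) : algConn G * (∑ v, (x v)^2) ≤ lapQ G x := by
  set N : ℝ := ∑ v, (x v)^2 with hN
  have hNpos : 0 < N := by
    rcases lt_or_eq_of_le (Finset.sum_nonneg (fun v _ => sq_nonneg (x v))) with h | h
    · exact h
    · exact absurd h.symm h1
  set c : ℝ := (Real.sqrt N)⁻¹ with hc
  have hsN : Real.sqrt N > 0 := Real.sqrt_pos.mpr hNpos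
  have hc2 : c^2 = N⁻¹ := by
    rw [hc, ← Real.sqrt_inv]
    exact Real.sq_sqrt (by positivity)
  have key := algConn_le G (c • x) ?_ ?_
  · rw [lapQ_smul, hc2] at key
    calc algConn G * N ≤ (N⁻¹ * lapQ G x) * N := by
          exact mul_le_mul_of_nonneg_right key hNpos.le
      _ = lapQ G x := by field_simp
  · simp only [Pi.smul_apply, smul_eq_mul, ← Finset.mul_sum, h0, mul_zero]
  · simp only [Pi.smul_apply, smul_eq_mul, mul_pow, ← Finset.mul_sum, hc2, ← hN]
    field_simp

lemma lapQ_symm_aux (G : SimpleGraph V) [DecidableRel G.Adj] (x z : V → ℝ) :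
    x ⬝ᵥ ((G.lapMatrix ℝ) *ᵥ z) = z ⬝ᵥ ((G.lapMatrix ℝ) *ᵥ x) := by
  have hs := SimpleGraph.isSymm_lapMatrix G (R := ℝ)
  simp only [dotProduct, Matrix.mulVec, Finset.mul_sum]
  rw [Finset.sum_comm]
  apply Finset.sum_congr rfl
  intro i _
  apply Finset.sum_congr rfl
  intro j _
  rw [show (SimpleGraph.lapMatrix ℝ G) j i = (SimpleGraph.lapMatrix ℝ G) i j from hs.apply i j]
  ring

lemma lapQ_expand (G : SimpleGraph V) (x z : V → ℝ) (t : ℝ) :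
    lapQ G (x + t • z) = lapQ G x
      + 2 * t * (letI := Classical.decRel G.Adj; z ⬝ᵥ ((G.lapMatrix ℝ) *ᵥ x))
      + t^2 * lapQ G z := by
  classical
  simp only [lapQ]
  simp only [Matrix.mulVec_add, Matrix.mulVec_smul, dotProduct_add,
    add_dotProduct, smul_dotProduct, dotProduct_smul, smul_eq_mul]
  rw [lapQ_symm_aux G x z]
  ring

lemma sum_lapMulVec (G : SimpleGraph V) [DecidableRel G.Adj] (x : V → ℝ) :
    ∑ v, ((G.lapMatrix ℝ) *ᵥ x) v = 0 := by
  have h1 : ∀ u : V, ((G.lapMatrix ℝ) *ᵥ (fun _ => 1)) u = 0 := by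
    intro u; rw [SimpleGraph.lapMatrix_mulVec_const_eq_zero]; rfl
  have : ∑ v, ((G.lapMatrix ℝ) *ᵥ x) v = ∑ u, x u * (((G.lapMatrix ℝ) *ᵥ (fun _ => 1)) u) := by
    simp only [Matrix.mulVec, dotProduct, mul_one]
    rw [Finset.sum_comm]
    congr 1; ext u
    rw [Finset.mul_sum]
    congr 1; ext v
    rw [(SimpleGraph.isSymm_lapMatrix G (R := ℝ)).apply u v]
    ring
  rw [this]
  simp [h1]

lemma exists_fiedler (G : SimpleGraph V) (hne : (lapSet G).Nonempty) :
    ∃ x : V → ℝ, (∑ v, x v) = 0 ∧ (∑ v, (x v) ^ 2) = 1 ∧ lapQ G x = algConn G ∧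
      (letI := Classical.decRel G.Adj; (G.lapMatrix ℝ) *ᵥ x = algConn G • x) := by
  classical
  set K : Set (V → ℝ) := {x | (∑ v, x v) = 0 ∧ (∑ v, (x v) ^ 2) = 1} with hK
  have hKclosed : IsClosed K := by
    apply IsClosed.inter
    · exact isClosed_eq (continuous_finset_sum _ fun v _ => continuous_apply v) continuous_const
    · exact isClosed_eq (continuous_finset_sum _ fun v _ => (continuous_apply v).pow 2)
        continuous_const
  have hKbdd : Bornology.IsBounded K := by
    apply Bornology.IsBounded.subset (Metric.isBounded_closedBall (x := (0 : V → ℝ)) (r := 1))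
    intro x hx
    rw [Metric.mem_closedBall, dist_zero_right]
    rw [pi_norm_le_iff_of_nonneg zero_le_one]
    intro v
    rw [Real.norm_eq_abs, abs_le_one_iff_mul_self_le_one, ← sq]
    rw [← hx.2]
    exact Finset.single_le_sum (fun u _ => sq_nonneg (x u)) (Finset.mem_univ v)
  have hKcompact : IsCompact K := Metric.isCompact_of_isClosed_isBounded hKclosed hKbdd
  have hcont : Continuous (lapQ G) := by
    have : lapQ G = fun x : V → ℝ => ∑ i, x i * ∑ j, (G.lapMatrix ℝ) i j * x j := by
      funext x
      simp only [lapQ, dotProduct, Matrix.mulVec]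
    rw [this]
    exact continuous_finset_sum _ fun i _ => (continuous_apply i).mul
      (continuous_finset_sum _ fun j _ => continuous_const.mul (continuous_apply j))
  have himg : lapSet G = lapQ G '' K := by
    ext r
    constructor
    · rintro ⟨x, h0, h1, rfl⟩; exact ⟨x, ⟨h0, h1⟩, rfl⟩
    · rintro ⟨x, ⟨h0, h1⟩, rfl⟩; exact ⟨x, h0, h1, rfl⟩
  have hcpt : IsCompact (lapSet G) := by rw [himg]; exact hKcompact.image hcont
  have hmem : sInf (lapSet G) ∈ lapSet G := hcpt.sInf_mem hne
  rw [← algConn_eq] at hmem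
  obtain ⟨x, h0, h1, hQx⟩ := hmem
  set μ := algConn G with hμ
  refine ⟨x, h0, h1, hQx.symm, ?_⟩
  -- first order condition
  have key : ∀ z : V → ℝ, (∑ v, z v) = 0 → z ⬝ᵥ ((G.lapMatrix ℝ) *ᵥ x) = μ * (z ⬝ᵥ x) := by
    intro z hz
    set B : ℝ := z ⬝ᵥ ((G.lapMatrix ℝ) *ᵥ x) - μ * (z ⬝ᵥ x) with hB
    set A : ℝ := lapQ G z - μ * (∑ v, (z v)^2) with hA
    have hquad : ∀ t : ℝ, 0 ≤ A * t^2 + 2 * B * t := by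
      intro t
      have hsum0 : (∑ v, (x v + t * z v)) = 0 := by
        rw [Finset.sum_add_distrib, h0, ← Finset.mul_sum, hz, mul_zero, add_zero]
      have hnorm : (∑ v, (x v + t * z v)^2)
          = 1 + 2 * t * (z ⬝ᵥ x) + t^2 * (∑ v, (z v)^2) := by
        have : ∀ v, (x v + t * z v)^2 = (x v)^2 + 2*t*(z v * x v) + t^2 * (z v)^2 := by
          intro v; ring
        simp_rw [this, Finset.sum_add_distrib, ← Finset.mul_sum, h1]
        rw [dotProduct]
      have hexp := lapQ_expand G x z t
      have hxtz : (fun v => x v + t * z v) = x + t • z := by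
        funext v; simp
      by_cases hNz : (∑ v, (x v + t * z v)^2) = 0
      · -- then x + t z = 0
        have hzero : ∀ v, x v + t * z v = 0 := by
          intro v
          have h := (Finset.sum_eq_zero_iff_of_nonneg
            (fun u (_ : u ∈ Finset.univ) => sq_nonneg (x u + t * z u))).mp hNz v (Finset.mem_univ v)
          exact pow_eq_zero_iff (n := 2) (by norm_num) |>.mp h
        have hxz0 : x + t • z = 0 := by
          funext v; simpa using hzero v
        have hQ0 : lapQ G (x + t • z) = 0 := by
          rw [hxz0]; simp [lapQ]
        rw [hQ0, ← hQx] at hexp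
        rw [hnorm] at hNz
        have hmul : μ * (1 + 2 * t * (z ⬝ᵥ x) + t^2 * (∑ v, (z v)^2)) = 0 := by
          rw [hNz, mul_zero]
        rw [hA, hB]
        nlinarith [hexp, hmul]
      · have hle := algConn_le' G (fun v => x v + t * z v) hsum0 hNz
        rw [hxtz] at hle
        have hxsq : (∑ v, ((x + t • z) v)^2) = ∑ v, (x v + t * z v)^2 := by
          apply Finset.sum_congr rfl; intro v _; simp
        rw [hexp, ← hQx, hnorm, ← hμ] at hle
        rw [hA, hB]
        nlinarith [hle]
    -- conclude B = 0
    have hB0 : B = 0 := by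
      by_contra hBne
      have h1t := hquad (-B / (|A| + 1))
      have hApos : (0:ℝ) < |A| + 1 := by positivity
      have hAle : A ≤ |A| := le_abs_self A
      have hB2 : 0 < B^2 := by positivity
      have : A * (-B / (|A| + 1))^2 + 2 * B * (-B / (|A| + 1))
          = (B^2 / (|A|+1)^2) * (A - 2*(|A|+1)) := by
        field_simp
        ring
      rw [this] at h1t
      nlinarith [mul_pos (div_pos hB2 (by positivity : (0:ℝ) < (|A|+1)^2))
        (by nlinarith : (0:ℝ) < 2*(|A|+1) - A)]
    linarith [hB, sub_eq_zero.mp hB0]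
  -- now conclude eigenvector
  set w : V → ℝ := (G.lapMatrix ℝ) *ᵥ x - μ • x with hw
  have hsumw : (∑ v, w v) = 0 := by
    simp only [hw, Pi.sub_apply, Pi.smul_apply, smul_eq_mul, Finset.sum_sub_distrib,
      ← Finset.mul_sum, h0, mul_zero, sub_zero]
    exact sum_lapMulVec G x
  have hww := key w hsumw
  have hwx : w ⬝ᵥ ((G.lapMatrix ℝ) *ᵥ x) - μ * (w ⬝ᵥ x) = w ⬝ᵥ w := by
    simp only [hw, dotProduct_sub]
    simp only [dotProduct]
    simp only [Pi.sub_apply, Pi.smul_apply, smul_eq_mul]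
    rw [Finset.mul_sum]
    rw [← Finset.sum_sub_distrib, ← Finset.sum_sub_distrib]
    congr 1; ext v
    ring
  have hw0 : w ⬝ᵥ w = 0 := by rw [← hwx, hww]; ring
  have : w = 0 := by
    have := dotProduct_self_eq_zero.mp hw0
    exact this
  have hfinal : (G.lapMatrix ℝ) *ᵥ x = μ • x := by
    have h := sub_eq_zero.mp this
    exact h
  exact hfinal

lemma lapSet_nonempty (G : SimpleGraph V) (u w : V) (huw : u ≠ w) : (lapSet G).Nonempty := by
  classical
  set c : ℝ := (Real.sqrt 2)⁻¹ with hc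
  have hc2 : c^2 = 2⁻¹ := by
    rw [hc, ← Real.sqrt_inv]
    exact Real.sq_sqrt (by norm_num)
  set x : V → ℝ := fun v => if v = u then c else if v = w then -c else 0 with hx
  have hxout : ∀ v ∈ Finset.univ, v ∉ ({u, w} : Finset V) → x v = 0 := by
    intro v _ hv
    simp only [Finset.mem_insert, Finset.mem_singleton, not_or] at hv
    simp [hx, hv.1, hv.2]
  have h0 : (∑ v, x v) = 0 := by
    rw [← Finset.sum_subset (Finset.subset_univ ({u, w} : Finset V)) hxout]
    rw [Finset.sum_pair huw]
    simp [hx, huw.symm]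
  have h1 : (∑ v, (x v)^2) = 1 := by
    have hxout2 : ∀ v ∈ Finset.univ, v ∉ ({u, w} : Finset V) → (x v)^2 = 0 := by
      intro v hv hv2; rw [hxout v hv hv2]; ring
    rw [← Finset.sum_subset (Finset.subset_univ ({u, w} : Finset V)) hxout2]
    rw [Finset.sum_pair huw]
    simp only [hx, if_pos rfl, if_neg huw.symm, if_true, neg_sq]
    norm_num [hc2]
  exact ⟨lapQ G x, x, h0, h1, rfl⟩

lemma algConn_ge (G : SimpleGraph V) (c : ℝ) (hne : (lapSet G).Nonempty)
    (h : ∀ x : V → ℝ, (∑ v, x v) = 0 → (∑ v, (x v) ^ 2) = 1 → c ≤ lapQ G x) :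
    c ≤ algConn G := by
  rw [algConn_eq]
  apply le_csInf hne
  rintro r ⟨x, h0, h1, rfl⟩
  exact h x h0 h1

lemma sum_fin_ite {d : ℕ} (c : ℕ) (F : ℕ → ℝ) :
    (∑ j : Fin d, (if (j : ℕ) = c then F (j : ℕ) else 0)) = if c < d then F c else 0 := by
  by_cases h : c < d
  · rw [if_pos h]
    rw [Finset.sum_eq_single (⟨c, h⟩ : Fin d)]
    · simp
    · intro j _ hj
      rw [if_neg]
      intro hjc
      exact hj (Fin.ext hjc)
    · intro habs; exact absurd (Finset.mem_univ _) habs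
  · rw [if_neg h]
    apply Finset.sum_eq_zero
    intro j _
    rw [if_neg]
    intro hjc
    exact h (hjc ▸ j.isLt)

lemma ite_or_add {P Q : Prop} [Decidable P] [Decidable Q] (h : ¬(P ∧ Q)) (a : ℝ) :
    (if P ∨ Q then a else 0) = (if P then a else 0) + (if Q then a else 0) := by
  by_cases hP : P <;> by_cases hQ : Q <;> simp_all

lemma lapMulVec_eq (G : SimpleGraph V) [DecidableRel G.Adj] (x : V → ℝ) (v : V) :
    ((G.lapMatrix ℝ) *ᵥ x) v = ∑ u, if G.Adj v u then (x v - x u) else 0 := by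
  rw [SimpleGraph.lapMatrix_mulVec_apply]
  have hnb : G.neighborFinset v = Finset.univ.filter (fun u => G.Adj v u) := by
    ext u; simp [SimpleGraph.mem_neighborFinset]
  rw [← Finset.sum_filter, ← hnb, Finset.sum_sub_distrib, Finset.sum_const]
  rw [SimpleGraph.degree]
  ring

section TkldAux

/-- Value of `x` on the `m`-th path vertex (0 outside range). -/
def pv {k l d : ℕ} (x : Fin k ⊕ Fin d ⊕ Fin l → ℝ) (m : ℕ) : ℝ :=
  if h : m < d then x (Sum.inr (Sum.inl ⟨m, h⟩)) else 0

lemma pv_eq {k l d : ℕ} (x : Fin k ⊕ Fin d ⊕ Fin l → ℝ) (j : Fin d) :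
    pv x (j : ℕ) = x (Sum.inr (Sum.inl j)) := by
  simp [pv, j.isLt]

lemma sum_path_f {k l d : ℕ} (x : Fin k ⊕ Fin d ⊕ Fin l → ℝ) (f : ℝ → ℝ) :
    ∑ j : Fin d, f (x (Sum.inr (Sum.inl j))) = ∑ m ∈ Finset.range d, f (pv x m) := by
  rw [← Fin.sum_univ_eq_sum_range (fun m => f (pv x m)) d]
  exact Finset.sum_congr rfl fun j _ => by rw [pv_eq]

end TkldAux

lemma lapQ_Tkld (k l d : ℕ) (hd : 1 ≤ d) (x : Fin k ⊕ Fin d ⊕ Fin l → ℝ) :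
    lapQ (Tkld k l d) x =
      (∑ i : Fin k, (x (Sum.inl i) - pv x 0)^2)
      + (∑ m ∈ Finset.range (d-1), (pv x m - pv x (m+1))^2)
      + (∑ q : Fin l, (x (Sum.inr (Sum.inr q)) - pv x (d-1))^2) := by
  classical
  have hd0 : 0 < d := hd
  rw [lapQ_eq_sum]
  set f : (Fin k ⊕ Fin d ⊕ Fin l) → (Fin k ⊕ Fin d ⊕ Fin l) → ℝ :=
    fun u v => if (Tkld k l d).Adj u v then (x u - x v)^2 else 0 with hf
  have hsymm : ∀ u v, f u v = f v u := by
    intro u v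
    by_cases h : (Tkld k l d).Adj u v
    · rw [hf]; simp only
      rw [if_pos h, if_pos h.symm]; ring
    · rw [hf]; simp only
      rw [if_neg h, if_neg (fun h' => h h'.symm)]
  -- block values
  have hS1 : (∑ i : Fin k, ∑ i' : Fin k, f (Sum.inl i) (Sum.inl i')) = 0 :=
    Finset.sum_eq_zero fun i _ => Finset.sum_eq_zero fun i' _ => if_neg (fun h => h)
  have hS3 : (∑ i : Fin k, ∑ q : Fin l, f (Sum.inl i) (Sum.inr (Sum.inr q))) = 0 :=
    Finset.sum_eq_zero fun i _ => Finset.sum_eq_zero fun q _ => if_neg (fun h => h)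
  have hS7 : (∑ q : Fin l, ∑ i : Fin k, f (Sum.inr (Sum.inr q)) (Sum.inl i)) = 0 :=
    Finset.sum_eq_zero fun q _ => Finset.sum_eq_zero fun i _ => if_neg (fun h => h)
  have hS9 : (∑ q : Fin l, ∑ q' : Fin l, f (Sum.inr (Sum.inr q)) (Sum.inr (Sum.inr q'))) = 0 :=
    Finset.sum_eq_zero fun q _ => Finset.sum_eq_zero fun q' _ => if_neg (fun h => h)
  have hS2 : (∑ i : Fin k, ∑ j : Fin d, f (Sum.inl i) (Sum.inr (Sum.inl j)))
      = ∑ i : Fin k, (x (Sum.inl i) - pv x 0)^2 := by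
    apply Finset.sum_congr rfl
    intro i _
    have hcong : ∀ j : Fin d, f (Sum.inl i) (Sum.inr (Sum.inl j))
        = (if (j:ℕ) = 0 then (x (Sum.inl i) - pv x (j:ℕ))^2 else 0) := by
      intro j
      rw [pv_eq]
      exact if_congr Iff.rfl rfl rfl
    rw [Finset.sum_congr rfl (fun j _ => hcong j),
      sum_fin_ite 0 (fun m => (x (Sum.inl i) - pv x m)^2), if_pos hd0]
  have hS8 : (∑ q : Fin l, ∑ j : Fin d, f (Sum.inr (Sum.inr q)) (Sum.inr (Sum.inl j)))
      = ∑ q : Fin l, (x (Sum.inr (Sum.inr q)) - pv x (d-1))^2 := by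
    apply Finset.sum_congr rfl
    intro q _
    have hcong : ∀ j : Fin d, f (Sum.inr (Sum.inr q)) (Sum.inr (Sum.inl j))
        = (if (j:ℕ) = d-1 then (x (Sum.inr (Sum.inr q)) - pv x (j:ℕ))^2 else 0) := by
      intro j
      rw [pv_eq]
      refine if_congr ?_ rfl rfl
      show (j:ℕ) + 1 = d ↔ (j:ℕ) = d - 1
      omega
    rw [Finset.sum_congr rfl (fun j _ => hcong j),
      sum_fin_ite (d-1) (fun m => (x (Sum.inr (Sum.inr q)) - pv x m)^2),
      if_pos (by omega : d - 1 < d)]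
  have hS4 : (∑ j : Fin d, ∑ i : Fin k, f (Sum.inr (Sum.inl j)) (Sum.inl i))
      = ∑ i : Fin k, (x (Sum.inl i) - pv x 0)^2 := by
    rw [Finset.sum_congr rfl (fun j _ => Finset.sum_congr rfl
      (fun i _ => hsymm (Sum.inr (Sum.inl j)) (Sum.inl i))), Finset.sum_comm, hS2]
  have hS6 : (∑ j : Fin d, ∑ q : Fin l, f (Sum.inr (Sum.inl j)) (Sum.inr (Sum.inr q)))
      = ∑ q : Fin l, (x (Sum.inr (Sum.inr q)) - pv x (d-1))^2 := by
    rw [Finset.sum_congr rfl (fun j _ => Finset.sum_congr rfl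
      (fun q _ => hsymm (Sum.inr (Sum.inl j)) (Sum.inr (Sum.inr q)))), Finset.sum_comm, hS8]
  have hS5 : (∑ j : Fin d, ∑ j' : Fin d, f (Sum.inr (Sum.inl j)) (Sum.inr (Sum.inl j')))
      = 2 * ∑ m ∈ Finset.range (d-1), (pv x m - pv x (m+1))^2 := by
    have hdd : ∀ (j j' : Fin d), f (Sum.inr (Sum.inl j)) (Sum.inr (Sum.inl j')) =
        (if (j':ℕ) = (j:ℕ)+1 then (pv x (j:ℕ) - pv x (j':ℕ))^2 else 0)
        + (if (j:ℕ) = (j':ℕ)+1 then (pv x (j:ℕ) - pv x (j':ℕ))^2 else 0) := by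
      intro j j'
      rw [show f (Sum.inr (Sum.inl j)) (Sum.inr (Sum.inl j')) =
          (if ((j:ℕ)+1 = (j':ℕ) ∨ (j':ℕ)+1 = (j:ℕ)) then (pv x (j:ℕ) - pv x (j':ℕ))^2 else 0) by
        rw [pv_eq, pv_eq]; exact if_congr Iff.rfl rfl rfl]
      rw [ite_or_add (by omega) _]
      congr 1
      · exact if_congr (by omega) rfl rfl
      · exact if_congr (by omega) rfl rfl
    simp only [hdd, Finset.sum_add_distrib]
    have hA : (∑ j : Fin d, ∑ j' : Fin d,
        (if (j':ℕ) = (j:ℕ)+1 then (pv x (j:ℕ) - pv x (j':ℕ))^2 else 0))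
        = ∑ m ∈ Finset.range (d-1), (pv x m - pv x (m+1))^2 := by
      have hinner : ∀ j : Fin d, (∑ j' : Fin d,
          (if (j':ℕ) = (j:ℕ)+1 then (pv x (j:ℕ) - pv x (j':ℕ))^2 else 0))
          = if (j:ℕ)+1 < d then (pv x (j:ℕ) - pv x ((j:ℕ)+1))^2 else 0 := by
        intro j
        exact sum_fin_ite ((j:ℕ)+1) (fun m => (pv x (j:ℕ) - pv x m)^2)
      rw [Finset.sum_congr rfl (fun j _ => hinner j)]
      rw [Fin.sum_univ_eq_sum_range (fun m => if m+1 < d then (pv x m - pv x (m+1))^2 else 0) d]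
      rw [show Finset.range (d-1) = Finset.filter (fun m => m+1 < d) (Finset.range d) by
        ext m; simp; omega]
      rw [Finset.sum_filter]
    have hB : (∑ j : Fin d, ∑ j' : Fin d,
        (if (j:ℕ) = (j':ℕ)+1 then (pv x (j:ℕ) - pv x (j':ℕ))^2 else 0))
        = ∑ j : Fin d, ∑ j' : Fin d,
        (if (j':ℕ) = (j:ℕ)+1 then (pv x (j:ℕ) - pv x (j':ℕ))^2 else 0) := by
      rw [Finset.sum_comm]
      apply Finset.sum_congr rfl; intro j _
      apply Finset.sum_congr rfl; intro j' _
      exact if_congr Iff.rfl (by ring) rfl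
    rw [hA, hB, hA]
    ring
  rw [Fintype.sum_sum_type]
  simp only [Fintype.sum_sum_type]
  simp only [Finset.sum_add_distrib]
  rw [hS1, hS2, hS3, hS4, hS5, hS6, hS7, hS8, hS9]
  ring

section
variable {k l d : ℕ} [inst : DecidableRel (Tkld k l d).Adj] (x : Fin k ⊕ Fin d ⊕ Fin l → ℝ)

lemma lap_left (hd0 : 0 < d) (i : Fin k) :
    (((Tkld k l d).lapMatrix ℝ) *ᵥ x) (Sum.inl i) = x (Sum.inl i) - pv x 0 := by
  classical
  rw [lapMulVec_eq, Fintype.sum_sum_type]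
  simp only [Fintype.sum_sum_type]
  have hz1 : (∑ a₁ : Fin k, if (Tkld k l d).Adj (Sum.inl i) (Sum.inl a₁)
      then x (Sum.inl i) - x (Sum.inl a₁) else 0) = 0 :=
    Finset.sum_eq_zero fun i' _ => if_neg (fun h => h)
  have hz2 : (∑ a₂ : Fin l, if (Tkld k l d).Adj (Sum.inl i) (Sum.inr (Sum.inr a₂))
      then x (Sum.inl i) - x (Sum.inr (Sum.inr a₂)) else 0) = 0 :=
    Finset.sum_eq_zero fun q _ => if_neg (fun h => h)
  rw [hz1, hz2]
  have hcong : ∀ j : Fin d, (if (Tkld k l d).Adj (Sum.inl i) (Sum.inr (Sum.inl j))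
      then (x (Sum.inl i) - x (Sum.inr (Sum.inl j))) else 0)
      = (if (j:ℕ) = 0 then (x (Sum.inl i) - pv x (j:ℕ)) else 0) := by
    intro j; rw [pv_eq]; exact if_congr Iff.rfl rfl rfl
  rw [Finset.sum_congr rfl (fun j _ => hcong j),
    sum_fin_ite 0 (fun m => x (Sum.inl i) - pv x m), if_pos hd0]
  ring

lemma lap_right (hd0 : 0 < d) (q : Fin l) :
    (((Tkld k l d).lapMatrix ℝ) *ᵥ x) (Sum.inr (Sum.inr q))
      = x (Sum.inr (Sum.inr q)) - pv x (d-1) := by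
  classical
  rw [lapMulVec_eq, Fintype.sum_sum_type]
  simp only [Fintype.sum_sum_type]
  have hz1 : (∑ a₁ : Fin k, if (Tkld k l d).Adj (Sum.inr (Sum.inr q)) (Sum.inl a₁)
      then x (Sum.inr (Sum.inr q)) - x (Sum.inl a₁) else 0) = 0 :=
    Finset.sum_eq_zero fun i' _ => if_neg (fun h => h)
  have hz2 : (∑ a₂ : Fin l, if (Tkld k l d).Adj (Sum.inr (Sum.inr q)) (Sum.inr (Sum.inr a₂))
      then x (Sum.inr (Sum.inr q)) - x (Sum.inr (Sum.inr a₂)) else 0) = 0 :=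
    Finset.sum_eq_zero fun q' _ => if_neg (fun h => h)
  rw [hz1, hz2]
  have hcong : ∀ j : Fin d, (if (Tkld k l d).Adj (Sum.inr (Sum.inr q)) (Sum.inr (Sum.inl j))
      then (x (Sum.inr (Sum.inr q)) - x (Sum.inr (Sum.inl j))) else 0)
      = (if (j:ℕ) = d-1 then (x (Sum.inr (Sum.inr q)) - pv x (j:ℕ)) else 0) := by
    intro j; rw [pv_eq]
    refine if_congr ?_ rfl rfl
    show (j:ℕ) + 1 = d ↔ (j:ℕ) = d - 1
    omega
  rw [Finset.sum_congr rfl (fun j _ => hcong j),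
    sum_fin_ite (d-1) (fun m => x (Sum.inr (Sum.inr q)) - pv x m),
    if_pos (by omega : d - 1 < d)]
  ring

lemma lap_path (m : Fin d) :
    (((Tkld k l d).lapMatrix ℝ) *ᵥ x) (Sum.inr (Sum.inl m)) =
      (if (m:ℕ) = 0 then (∑ i : Fin k, (pv x (m:ℕ) - x (Sum.inl i))) else 0)
      + (((if (m:ℕ)+1 < d then pv x (m:ℕ) - pv x ((m:ℕ)+1) else 0)
        + (if 1 ≤ (m:ℕ) then pv x (m:ℕ) - pv x ((m:ℕ)-1) else 0))
      + (if (m:ℕ)+1 = d then (∑ q : Fin l, (pv x (m:ℕ) - x (Sum.inr (Sum.inr q)))) else 0)) := by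
  classical
  rw [lapMulVec_eq, Fintype.sum_sum_type]
  simp only [Fintype.sum_sum_type]
  congr 1
  · -- pendant-left block
    by_cases hm : (m:ℕ) = 0
    · rw [if_pos hm]
      apply Finset.sum_congr rfl
      intro i _
      rw [if_pos (show (Tkld k l d).Adj (Sum.inr (Sum.inl m)) (Sum.inl i) from hm), pv_eq]
    · rw [if_neg hm]
      exact Finset.sum_eq_zero fun i _ => if_neg (fun h => hm h)
  congr 1
  · -- path block
    have hcong : ∀ j : Fin d, (if (Tkld k l d).Adj (Sum.inr (Sum.inl m)) (Sum.inr (Sum.inl j))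
        then (x (Sum.inr (Sum.inl m)) - x (Sum.inr (Sum.inl j))) else 0)
        = (if (j:ℕ) = (m:ℕ)+1 then (pv x (m:ℕ) - pv x (j:ℕ)) else 0)
          + (if (j:ℕ)+1 = (m:ℕ) then (pv x (m:ℕ) - pv x (j:ℕ)) else 0) := by
      intro j
      rw [show (if (Tkld k l d).Adj (Sum.inr (Sum.inl m)) (Sum.inr (Sum.inl j))
          then (x (Sum.inr (Sum.inl m)) - x (Sum.inr (Sum.inl j))) else 0)
          = (if ((m:ℕ)+1 = (j:ℕ) ∨ (j:ℕ)+1 = (m:ℕ))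
            then (pv x (m:ℕ) - pv x (j:ℕ)) else 0) by
        rw [pv_eq, pv_eq]; exact if_congr Iff.rfl rfl rfl]
      rw [ite_or_add (by omega) _]
      congr 1
      exact if_congr (by omega) rfl rfl
    rw [Finset.sum_congr rfl (fun j _ => hcong j), Finset.sum_add_distrib]
    congr 1
    · rw [sum_fin_ite ((m:ℕ)+1) (fun n => pv x (m:ℕ) - pv x n)]
    · by_cases hm : 1 ≤ (m:ℕ)
      · have hcong2 : ∀ j : Fin d, (if (j:ℕ)+1 = (m:ℕ) then (pv x (m:ℕ) - pv x (j:ℕ)) else 0)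
            = (if (j:ℕ) = (m:ℕ)-1 then (pv x (m:ℕ) - pv x (j:ℕ)) else 0) := by
          intro j; exact if_congr (by omega) rfl rfl
        rw [Finset.sum_congr rfl (fun j _ => hcong2 j),
          sum_fin_ite ((m:ℕ)-1) (fun n => pv x (m:ℕ) - pv x n),
          if_pos (by omega : (m:ℕ)-1 < d), if_pos hm]
      · rw [if_neg hm]
        exact Finset.sum_eq_zero fun j _ => if_neg (by omega)
  · -- pendant-right block
    by_cases hm : (m:ℕ)+1 = d
    · rw [if_pos hm]
      apply Finset.sum_congr rfl
      intro q _
      rw [if_pos (show (Tkld k l d).Adj (Sum.inr (Sum.inl m)) (Sum.inr (Sum.inr q)) from hm),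
        pv_eq]
    · rw [if_neg hm]
      exact Finset.sum_eq_zero fun q _ => if_neg (fun h => hm h)

end

section TkldMain

variable {k l d : ℕ}

lemma adj_const (hd : 1 ≤ d) (x : Fin k ⊕ Fin d ⊕ Fin l → ℝ)
    (h : ∀ u v, (Tkld k l d).Adj u v → x u = x v) : ∀ v, x v = pv x 0 := by
  have hd0 : 0 < d := hd
  have hpath : ∀ m (hm : m < d), x (Sum.inr (Sum.inl ⟨m, hm⟩)) = pv x 0 := by
    intro m
    induction m with
    | zero => intro hm; rw [pv, dif_pos hd0]
    | succ n ih =>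
      intro hm
      have hn : n < d := by omega
      have hadj : (Tkld k l d).Adj (Sum.inr (Sum.inl ⟨n, hn⟩)) (Sum.inr (Sum.inl ⟨n+1, hm⟩)) :=
        Or.inl rfl
      rw [← h _ _ hadj, ih hn]
  intro v
  match v with
  | Sum.inl i =>
    have hadj : (Tkld k l d).Adj (Sum.inl i) (Sum.inr (Sum.inl ⟨0, hd0⟩)) := rfl
    rw [h _ _ hadj, hpath 0 hd0]
  | Sum.inr (Sum.inl j) =>
    simpa using hpath j.1 j.isLt
  | Sum.inr (Sum.inr q) =>
    have hadj : (Tkld k l d).Adj (Sum.inr (Sum.inr q)) (Sum.inr (Sum.inl ⟨d-1, by omega⟩)) := by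
      show d - 1 + 1 = d; omega
    rw [h _ _ hadj, hpath (d-1) (by omega)]

lemma eigen_zero [inst : DecidableRel (Tkld k l d).Adj] (hd2 : 2 ≤ d) {μ : ℝ} (hμ1 : μ ≠ 1)
    (x : Fin k ⊕ Fin d ⊕ Fin l → ℝ)
    (heig : (((Tkld k l d).lapMatrix ℝ) *ᵥ x) = μ • x) (h0 : pv x 0 = 0) : ∀ v, x v = 0 := by
  have heig' : ∀ v, (((Tkld k l d).lapMatrix ℝ) *ᵥ x) v = μ * x v := by
    intro v; rw [heig]; rfl
  have hd0 : 0 < d := by omega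
  have hμ1' : (1:ℝ) - μ ≠ 0 := fun h => hμ1 (by linarith)
  have hpend : ∀ i : Fin k, x (Sum.inl i) = 0 := by
    intro i
    have h := heig' (Sum.inl i)
    rw [lap_left x hd0 i, h0] at h
    have h2 : (1 - μ) * x (Sum.inl i) = 0 := by linarith
    rcases mul_eq_zero.mp h2 with h' | h'
    · exact absurd h' hμ1'
    · exact h'
  have hpath : ∀ m : ℕ, pv x m = 0 ∧ pv x (m+1) = 0 := by
    intro m
    induction m with
    | zero =>
      refine ⟨h0, ?_⟩
      set jv : Fin d := ⟨0, hd0⟩ with hjv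
      have h : _ = μ * x (Sum.inr (Sum.inl jv)) := (lap_path x jv) ▸ heig' (Sum.inr (Sum.inl jv))
      have hjc : (jv : ℕ) = 0 := rfl
      rw [hjc] at h
      rw [if_pos rfl, if_pos (show 0+1 < d by omega), if_neg (show ¬(1 ≤ 0) by omega),
        if_neg (show ¬(0+1 = d) by omega)] at h
      have hz : (∑ i : Fin k, (pv x 0 - x (Sum.inl i))) = 0 :=
        Finset.sum_eq_zero fun i _ => by rw [h0, hpend i]; ring
      rw [hz] at h
      have hxv : x (Sum.inr (Sum.inl jv)) = pv x 0 := by rw [← pv_eq x jv, hjc]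
      rw [hxv, h0] at h
      linarith
    | succ n ih =>
      refine ⟨ih.2, ?_⟩
      by_cases hlt : n+2 < d
      · set jv : Fin d := ⟨n+1, by omega⟩ with hjv
        have h : _ = μ * x (Sum.inr (Sum.inl jv)) := (lap_path x jv) ▸ heig' (Sum.inr (Sum.inl jv))
        have hjc : (jv : ℕ) = n+1 := rfl
        rw [hjc] at h
        rw [if_neg (show ¬(n+1 = 0) by omega), if_pos (show n+1+1 < d by omega),
          if_pos (show 1 ≤ n+1 by omega), if_neg (show ¬(n+1+1 = d) by omega)] at h
        have hxv : x (Sum.inr (Sum.inl jv)) = pv x (n+1) := by rw [← pv_eq x jv, hjc]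
        have he1 : n+1+1 = n+2 := rfl
        have he2 : n+1-1 = n := rfl
        rw [hxv, he1, he2, ih.1, ih.2] at h
        have : pv x (n+2) = 0 := by linarith
        exact this
      · rw [pv, dif_neg (by omega : ¬(n+1+1 < d))]
  have hrp : ∀ q : Fin l, x (Sum.inr (Sum.inr q)) = 0 := by
    intro q
    have h := heig' (Sum.inr (Sum.inr q))
    rw [lap_right x hd0 q, (hpath (d-1)).1] at h
    have h2 : (1 - μ) * x (Sum.inr (Sum.inr q)) = 0 := by linarith
    rcases mul_eq_zero.mp h2 with h' | h'
    · exact absurd h' hμ1'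
    · exact h'
  intro v
  match v with
  | Sum.inl i => exact hpend i
  | Sum.inr (Sum.inl j) => rw [← pv_eq x j]; exact (hpath j.1).1
  | Sum.inr (Sum.inr q) => exact hrp q

end TkldMain

lemma lt_one_of_mul_le (α Q N : ℝ) (h : α * N ≤ Q) (hQN : Q < N) (hN : 0 < N) : α < 1 := by
  nlinarith

lemma algConn_lt_one (k l d : ℕ) (hk : 2 ≤ k) (hl : 1 ≤ l) (hd2 : 2 ≤ d) :
    algConn (Tkld k l d) < 1 := by
  classical
  have hd0 : 0 < d := by omega
  set m : ℕ := d - 1 + l with hm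
  have hm2 : 2 ≤ m := by omega
  have hmR : (0:ℝ) < (m:ℝ) := by
    have : (2:ℝ) ≤ (m:ℝ) := by exact_mod_cast hm2
    linarith
  set β : ℝ := ((k:ℝ)+1)/(m:ℝ) with hβ
  have hβpos : 0 < β := by positivity
  have hmb : (m:ℝ) * β = (k:ℝ) + 1 := by
    rw [hβ]; field_simp
  set z : Fin k ⊕ Fin d ⊕ Fin l → ℝ :=
    Sum.elim (fun _ => 1)
      (Sum.elim (fun j : Fin d => if (j:ℕ) = 0 then 1 else -β) (fun _ => -β)) with hz
  have hpvz : ∀ m', m' < d → pv z m' = if m' = 0 then 1 else -β := by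
    intro m' hm'
    rw [pv, dif_pos hm']
    rfl
  have hmcast : ((m:ℝ)) = (d:ℝ) - 1 + l := by
    rw [hm]
    push_cast [Nat.cast_sub hd0]
    ring
  have h2 : ∑ j : Fin d, z (Sum.inr (Sum.inl j)) = 1 + ((d:ℝ) - 1) * (-β) := by
    have hc : ∀ j : Fin d, z (Sum.inr (Sum.inl j))
        = (-β) + (if (j:ℕ) = 0 then 1 + β else 0) := by
      intro j
      by_cases hj : (j:ℕ) = 0 <;> simp [hz, hj]
    rw [Finset.sum_congr rfl fun j _ => hc j, Finset.sum_add_distrib, Finset.sum_const,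
      sum_fin_ite 0 (fun _ => 1+β), if_pos hd0, Finset.card_univ, Fintype.card_fin]
    push_cast
    ring
  have h2sq : ∑ j : Fin d, (z (Sum.inr (Sum.inl j)))^2 = 1 + ((d:ℝ) - 1) * β^2 := by
    have hc : ∀ j : Fin d, (z (Sum.inr (Sum.inl j)))^2
        = β^2 + (if (j:ℕ) = 0 then 1 - β^2 else 0) := by
      intro j
      by_cases hj : (j:ℕ) = 0 <;> simp [hz, hj] <;> ring
    rw [Finset.sum_congr rfl fun j _ => hc j, Finset.sum_add_distrib, Finset.sum_const,
      sum_fin_ite 0 (fun _ => 1 - β^2), if_pos hd0, Finset.card_univ, Fintype.card_fin]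
    push_cast
    ring
  have hsumz : ∑ v, z v = 0 := by
    rw [Fintype.sum_sum_type]
    simp only [Fintype.sum_sum_type]
    rw [h2]
    have h1 : ∑ _i : Fin k, z (Sum.inl _i) = (k:ℝ) := by simp [hz]
    have h3 : ∑ _q : Fin l, z (Sum.inr (Sum.inr _q)) = (l:ℝ) * (-β) := by simp [hz] <;> ring
    rw [h1, h3]
    have : ((d:ℝ) - 1 + l) * β = (k:ℝ) + 1 := by rw [← hmcast]; exact hmb
    nlinarith [this]
  have hsumzsq : ∑ v, (z v)^2 = ((k:ℝ)+1) + (m:ℝ) * β^2 := by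
    rw [Fintype.sum_sum_type]
    simp only [Fintype.sum_sum_type]
    rw [h2sq]
    have h1 : ∑ _i : Fin k, (z (Sum.inl _i))^2 = (k:ℝ) := by simp [hz]
    have h3 : ∑ _q : Fin l, (z (Sum.inr (Sum.inr _q)))^2 = (l:ℝ) * β^2 := by
      simp [hz] <;> ring
    rw [h1, h3, hmcast]
    ring
  have hQ : lapQ (Tkld k l d) z = (1+β)^2 := by
    rw [lapQ_Tkld k l d (by omega) z]
    have hL : ∑ i : Fin k, (z (Sum.inl i) - pv z 0)^2 = 0 := by
      apply Finset.sum_eq_zero; intro i _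
      rw [hpvz 0 hd0, if_pos rfl]
      simp [hz]
    have hR : ∑ q : Fin l, (z (Sum.inr (Sum.inr q)) - pv z (d-1))^2 = 0 := by
      apply Finset.sum_eq_zero; intro q _
      rw [hpvz (d-1) (by omega), if_neg (by omega)]
      simp [hz]
    have hM : ∑ m' ∈ Finset.range (d-1), (pv z m' - pv z (m'+1))^2 = (1+β)^2 := by
      rw [Finset.sum_eq_single_of_mem 0 (Finset.mem_range.mpr (by omega))]
      · rw [hpvz 0 hd0, if_pos rfl, hpvz 1 (by omega), if_neg (by omega)]
        ring
      · intro b hb hb0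
        have hbd := Finset.mem_range.mp hb
        rw [hpvz b (by omega), if_neg hb0, hpvz (b+1) (by omega), if_neg (by omega)]
        ring
    rw [hL, hM, hR]
    ring
  have hNpos : (0:ℝ) < ((k:ℝ)+1) + (m:ℝ)*β^2 := by positivity
  have hle := algConn_le' (Tkld k l d) z hsumz (by rw [hsumzsq]; positivity)
  rw [hsumzsq, hQ] at hle
  have hkR : (2:ℝ) ≤ (k:ℝ) := by exact_mod_cast hk
  have hnat : (k:ℝ) + 1 < (m:ℝ) * (k:ℝ) := by
    have h4 : k + 1 < m * k := by
      calc k + 1 < 2 * k := by omega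
        _ ≤ m * k := Nat.mul_le_mul_right k hm2
    exact_mod_cast h4
  have hkey : (1+β)^2 < ((k:ℝ)+1) + (m:ℝ)*β^2 := by
    have h1 : ((m:ℝ))^2 * ((1+β)^2) = ((m:ℝ) + (k:ℝ) + 1)^2 := by
      calc ((m:ℝ))^2 * ((1+β)^2) = ((m:ℝ) + (m:ℝ)*β)^2 := by ring
        _ = ((m:ℝ) + ((k:ℝ)+1))^2 := by rw [hmb]
        _ = ((m:ℝ) + (k:ℝ) + 1)^2 := by ring
    have h2' : ((m:ℝ))^2 * (((k:ℝ)+1) + (m:ℝ)*β^2)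
        = (m:ℝ)^2*((k:ℝ)+1) + (m:ℝ)*((k:ℝ)+1)^2 := by
      calc ((m:ℝ))^2 * (((k:ℝ)+1) + (m:ℝ)*β^2)
          = (m:ℝ)^2*((k:ℝ)+1) + (m:ℝ)*((m:ℝ)*β)^2 := by ring
        _ = (m:ℝ)^2*((k:ℝ)+1) + (m:ℝ)*((k:ℝ)+1)^2 := by rw [hmb]
    have h3 : ((m:ℝ) + (k:ℝ) + 1)^2 < (m:ℝ)^2*((k:ℝ)+1) + (m:ℝ)*((k:ℝ)+1)^2 := by
      nlinarith [mul_pos (show (0:ℝ) < (m:ℝ)+(k:ℝ)+1 by positivity)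
        (show (0:ℝ) < (m:ℝ)*(k:ℝ) - (k:ℝ) - 1 by linarith)]
    have h4 : ((m:ℝ))^2 * ((1+β)^2) < ((m:ℝ))^2 * (((k:ℝ)+1) + (m:ℝ)*β^2) := by
      rw [h1, h2']; exact h3
    exact lt_of_mul_lt_mul_left h4 (by positivity)
  exact lt_one_of_mul_le _ _ _ hle hkey hNpos

lemma algConn_ge_one (k l : ℕ) (hk : 1 ≤ k) : 1 ≤ algConn (Tkld k l 1) := by
  classical
  apply algConn_ge _ 1
    (lapSet_nonempty _ (Sum.inl ⟨0, hk⟩) (Sum.inr (Sum.inl ⟨0, one_pos⟩)) (by simp))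
  intro x h0 h1
  rw [lapQ_Tkld k l 1 le_rfl x]
  rw [show (1:ℕ) - 1 = 0 from rfl, Finset.range_zero, Finset.sum_empty]
  set c : ℝ := pv x 0 with hc
  rw [Fintype.sum_sum_type] at h0 h1
  simp only [Fintype.sum_sum_type] at h0 h1
  have hpv : ∑ j : Fin 1, x (Sum.inr (Sum.inl j)) = c := by
    rw [Fin.sum_univ_one, hc, pv, dif_pos one_pos]
    rfl
  have hpvsq : ∑ j : Fin 1, (x (Sum.inr (Sum.inl j)))^2 = c^2 := by
    rw [Fin.sum_univ_one, hc, pv, dif_pos one_pos]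
    rfl
  rw [hpv] at h0
  rw [hpvsq] at h1
  have hexp1 : ∑ i : Fin k, (x (Sum.inl i) - c)^2
      = (∑ i : Fin k, (x (Sum.inl i))^2) - 2*c*(∑ i : Fin k, x (Sum.inl i)) + k*c^2 := by
    have : ∀ i : Fin k, (x (Sum.inl i) - c)^2
        = (x (Sum.inl i))^2 - 2*c*(x (Sum.inl i)) + c^2 := fun i => by ring
    rw [Finset.sum_congr rfl fun i _ => this i]
    rw [Finset.sum_add_distrib, Finset.sum_sub_distrib, ← Finset.mul_sum, Finset.sum_const,
      Finset.card_univ, Fintype.card_fin, nsmul_eq_mul]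
  have hexp2 : ∑ q : Fin l, (x (Sum.inr (Sum.inr q)) - c)^2
      = (∑ q : Fin l, (x (Sum.inr (Sum.inr q)))^2)
        - 2*c*(∑ q : Fin l, x (Sum.inr (Sum.inr q))) + l*c^2 := by
    have : ∀ q : Fin l, (x (Sum.inr (Sum.inr q)) - c)^2
        = (x (Sum.inr (Sum.inr q)))^2 - 2*c*(x (Sum.inr (Sum.inr q))) + c^2 := fun q => by ring
    rw [Finset.sum_congr rfl fun q _ => this q]
    rw [Finset.sum_add_distrib, Finset.sum_sub_distrib, ← Finset.mul_sum, Finset.sum_const,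
      Finset.card_univ, Fintype.card_fin, nsmul_eq_mul]
  rw [hexp1, hexp2]
  have hkcast : (0:ℝ) ≤ (k:ℝ) := Nat.cast_nonneg k
  have hlcast : (0:ℝ) ≤ (l:ℝ) := Nat.cast_nonneg l
  have hPR : (∑ i : Fin k, x (Sum.inl i)) + (∑ q : Fin l, x (Sum.inr (Sum.inr q))) = -c := by
    linarith
  have hc2 : c * ((∑ i : Fin k, x (Sum.inl i)) + (∑ q : Fin l, x (Sum.inr (Sum.inr q))))
      = -c^2 := by rw [hPR]; ring
  nlinarith [sq_nonneg c, mul_nonneg hkcast (sq_nonneg c), mul_nonneg hlcast (sq_nonneg c), hc2]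

section D2
variable (k' l : ℕ) (t u v s : ℝ)

/-- The block test vector on `T(k', l, 2)`. -/
noncomputable def zvec2 : Fin k' ⊕ Fin 2 ⊕ Fin l → ℝ :=
  Sum.elim (fun _ => t) (Sum.elim (fun j : Fin 2 => if (j:ℕ) = 0 then u else v) (fun _ => s))

lemma zvec2_sum : ∑ w, zvec2 k' l t u v s w = (k':ℝ)*t + ((u + v) + (l:ℝ)*s) := by
  rw [Fintype.sum_sum_type]
  simp only [Fintype.sum_sum_type]
  congr 1
  · simp [zvec2]
  congr 1
  · rw [Fin.sum_univ_two]
    simp [zvec2]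
  · simp [zvec2] <;> ring

lemma zvec2_sumsq : ∑ w, (zvec2 k' l t u v s w)^2
    = (k':ℝ)*t^2 + ((u^2 + v^2) + (l:ℝ)*s^2) := by
  rw [Fintype.sum_sum_type]
  simp only [Fintype.sum_sum_type]
  congr 1
  · simp [zvec2]
  congr 1
  · rw [Fin.sum_univ_two]
    simp [zvec2]
  · simp [zvec2] <;> ring

lemma zvec2_pv0 : pv (zvec2 k' l t u v s) 0 = u := by
  rw [pv, dif_pos (by omega : 0 < 2)]
  simp [zvec2]

lemma zvec2_pv1 : pv (zvec2 k' l t u v s) 1 = v := by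
  rw [pv, dif_pos (by omega : 1 < 2)]
  simp [zvec2]

lemma zvec2_lapQ : lapQ (Tkld k' l 2) (zvec2 k' l t u v s)
    = (k':ℝ)*(t - u)^2 + (u - v)^2 + (l:ℝ)*(s - v)^2 := by
  rw [lapQ_Tkld k' l 2 (by omega) (zvec2 k' l t u v s)]
  rw [show (2:ℕ) - 1 = 1 from rfl]
  congr 1
  · congr 1
    · rw [Finset.sum_congr rfl (fun i _ => by
        rw [zvec2_pv0, show zvec2 k' l t u v s (Sum.inl i) = t from rfl]),
        Finset.sum_const, Finset.card_univ, Fintype.card_fin, nsmul_eq_mul]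
    · rw [Finset.sum_range_one, zvec2_pv0, zvec2_pv1]
  · rw [Finset.sum_congr rfl (fun q _ => by
      rw [zvec2_pv1, show zvec2 k' l t u v s (Sum.inr (Sum.inr q)) = s from rfl]),
      Finset.sum_const, Finset.card_univ, Fintype.card_fin, nsmul_eq_mul]

end D2

lemma upper_d1 (k l : ℕ) (hk : 2 ≤ k) (hl : 1 ≤ l) : algConn (Tkld (k-1) l 2) < 1 := by
  classical
  by_cases hcase : k = 2 ∧ l = 1
  · obtain ⟨rfl, rfl⟩ := hcase
    have hsum : ∑ w, zvec2 (2-1) 1 2 1 (-1) (-2) w = 0 := by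
      rw [zvec2_sum]; norm_num
    have hsumsq : ∑ w, (zvec2 (2-1) 1 2 1 (-1) (-2) w)^2 = 10 := by
      rw [zvec2_sumsq]; norm_num
    have hle := algConn_le' (Tkld (2-1) 1 2) (zvec2 (2-1) 1 2 1 (-1) (-2)) hsum
      (by rw [hsumsq]; norm_num)
    rw [hsumsq, zvec2_lapQ] at hle
    norm_num at hle
    apply lt_one_of_mul_le _ 6 10 hle (by norm_num) (by norm_num)
  · have hkl : l + 2 ≤ k * l := by
      rcases Nat.lt_or_ge k 3 with h3 | h3
      · have hk2 : k = 2 := by omega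
        have hl2 : 2 ≤ l := by
          rcases Nat.lt_or_ge l 2 with h | h
          · exact absurd ⟨hk2, by omega⟩ hcase
          · exact h
        calc l + 2 ≤ l + l := by omega
          _ = 2 * l := by ring
          _ = k * l := by rw [hk2]
      · calc l + 2 ≤ l + 2*l := by omega
          _ = 3 * l := by ring
          _ ≤ k * l := Nat.mul_le_mul_right l h3
    set β : ℝ := (k:ℝ)/((l:ℝ)+1) with hβ
    have hl1 : (0:ℝ) < (l:ℝ)+1 := by positivity
    have hβm : ((l:ℝ)+1) * β = (k:ℝ) := by rw [hβ]; field_simp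
    have hkc : ((k:ℝ)) - 1 = ((k-1:ℕ):ℝ) := by
      rw [Nat.cast_sub (by omega : 1 ≤ k)]; simp
    have hsum : ∑ w, zvec2 (k-1) l 1 1 (-β) (-β) w = 0 := by
      rw [zvec2_sum, ← hkc]
      nlinarith [hβm]
    have hsumsq : ∑ w, (zvec2 (k-1) l 1 1 (-β) (-β) w)^2 = (k:ℝ) + ((l:ℝ)+1)*β^2 := by
      rw [zvec2_sumsq, ← hkc]
      ring
    have hNpos : (0:ℝ) < (k:ℝ) + ((l:ℝ)+1)*β^2 := by positivity
    have hle := algConn_le' (Tkld (k-1) l 2) (zvec2 (k-1) l 1 1 (-β) (-β)) hsum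
      (by rw [hsumsq]; positivity)
    rw [hsumsq, zvec2_lapQ, ← hkc] at hle
    have hle2 : algConn (Tkld (k-1) l 2) * ((k:ℝ) + ((l:ℝ)+1)*β^2) ≤ (1+β)^2 := by
      calc algConn (Tkld (k-1) l 2) * ((k:ℝ) + ((l:ℝ)+1)*β^2)
          ≤ ((k:ℝ)-1)*(1-1)^2 + (1-(-β))^2 + (l:ℝ)*((-β)-(-β))^2 := hle
        _ = (1+β)^2 := by ring
    have hklR : (l:ℝ) + 2 ≤ (k:ℝ) * (l:ℝ) := by exact_mod_cast hkl
    have hkey : (1+β)^2 < (k:ℝ) + ((l:ℝ)+1)*β^2 := by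
      have h1 : (((l:ℝ)+1))^2 * ((1+β)^2) = (((l:ℝ)+1) + (k:ℝ))^2 := by
        calc (((l:ℝ)+1))^2 * ((1+β)^2) = (((l:ℝ)+1) + ((l:ℝ)+1)*β)^2 := by ring
          _ = (((l:ℝ)+1) + (k:ℝ))^2 := by rw [hβm]
      have h2 : (((l:ℝ)+1))^2 * ((k:ℝ) + ((l:ℝ)+1)*β^2)
          = ((l:ℝ)+1)^2*(k:ℝ) + ((l:ℝ)+1)*(k:ℝ)^2 := by
        calc (((l:ℝ)+1))^2 * ((k:ℝ) + ((l:ℝ)+1)*β^2)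
            = ((l:ℝ)+1)^2*(k:ℝ) + ((l:ℝ)+1)*(((l:ℝ)+1)*β)^2 := by ring
          _ = ((l:ℝ)+1)^2*(k:ℝ) + ((l:ℝ)+1)*(k:ℝ)^2 := by rw [hβm]
      have h3 : (((l:ℝ)+1) + (k:ℝ))^2 < ((l:ℝ)+1)^2*(k:ℝ) + ((l:ℝ)+1)*(k:ℝ)^2 := by
        nlinarith [mul_pos (show (0:ℝ) < (l:ℝ)+1+(k:ℝ) by positivity)
          (show (0:ℝ) < (k:ℝ)*(l:ℝ) - (l:ℝ) - 1 by linarith)]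
      have h4 : (((l:ℝ)+1))^2 * ((1+β)^2) < (((l:ℝ)+1))^2 * ((k:ℝ) + ((l:ℝ)+1)*β^2) := by
        rw [h1, h2]; exact h3
      exact lt_of_mul_lt_mul_left h4 (by positivity)
    exact lt_one_of_mul_le _ _ _ hle2 hkey hNpos

lemma main_ge2 (k l d : ℕ) (hk : 2 ≤ k) (hl : 1 ≤ l) (hd2 : 2 ≤ d) :
    algConn (Tkld (k-1) l (d+1)) < algConn (Tkld k l d) := by
  classical
  have hd0 : 0 < d := by omega
  set μ : ℝ := algConn (Tkld k l d) with hμdef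
  have hne : (lapSet (Tkld k l d)).Nonempty :=
    lapSet_nonempty _ (Sum.inl ⟨0, by omega⟩) (Sum.inl ⟨1, by omega⟩)
      (by simp [Fin.ext_iff])
  obtain ⟨x, hx0, hx1, hxQ, heig⟩ := exists_fiedler (Tkld k l d) hne
  rw [← hμdef] at hxQ heig
  have heig' : ∀ w, (((Tkld k l d).lapMatrix ℝ) *ᵥ x) w = μ * x w := by
    intro w; rw [heig]; rfl
  have hμ1 : μ < 1 := algConn_lt_one k l d hk hl hd2
  have hμ1' : (1:ℝ) - μ ≠ 0 := by intro h; linarith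
  -- μ ≥ 0
  have hμnn : 0 ≤ μ := by rw [← hxQ]; exact lapQ_nonneg (Tkld k l d) x
  -- μ ≠ 0
  have hμ0 : μ ≠ 0 := by
    intro h0
    have hQ0 : lapQ (Tkld k l d) x = 0 := by rw [hxQ, h0]
    have hlin : Matrix.toLinearMap₂' ℝ ((Tkld k l d).lapMatrix ℝ) x x = 0 := by
      rw [Matrix.toLinearMap₂'_apply']
      exact hQ0
    have hadj := (SimpleGraph.lapMatrix_toLinearMap₂'_apply'_eq_zero_iff_forall_adj
      ℝ (Tkld k l d) x).mp hlin
    have hconst := adj_const (by omega) x hadj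
    have hsum : (0:ℝ) = (Fintype.card (Fin k ⊕ Fin d ⊕ Fin l) : ℝ) * pv x 0 := by
      rw [← hx0, Finset.sum_congr rfl fun w _ => hconst w, Finset.sum_const,
        Finset.card_univ, nsmul_eq_mul]
    have hsumsq : (1:ℝ) = (Fintype.card (Fin k ⊕ Fin d ⊕ Fin l) : ℝ) * (pv x 0)^2 := by
      rw [← hx1, Finset.sum_congr rfl fun w _ => by rw [hconst w], Finset.sum_const,
        Finset.card_univ, nsmul_eq_mul]
    have hcard : (0:ℝ) < (Fintype.card (Fin k ⊕ Fin d ⊕ Fin l) : ℝ) := by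
      have : 0 < Fintype.card (Fin k ⊕ Fin d ⊕ Fin l) := by
        simp [Fintype.card_sum]; omega
      exact_mod_cast this
    have hpv0 : pv x 0 = 0 := by
      rcases mul_eq_zero.mp hsum.symm with h | h
      · exact absurd h (ne_of_gt hcard)
      · exact h
    rw [hpv0] at hsumsq
    simp at hsumsq
  have hμpos : 0 < μ := lt_of_le_of_ne hμnn (Ne.symm hμ0)
  -- pendant values
  have hpμ : ∀ i : Fin k, (1-μ) * x (Sum.inl i) = pv x 0 := by
    intro i
    have h := heig' (Sum.inl i)
    rw [lap_left x hd0 i] at h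
    linarith
  set a : ℝ := pv x 0 / (1 - μ) with ha
  have hpend : ∀ i : Fin k, x (Sum.inl i) = a := by
    intro i
    rw [ha, ← hpμ i]
    field_simp
  have hpva : pv x 0 = (1-μ) * a := by
    rw [ha]; field_simp
  have hμa : a - pv x 0 = μ * a := by rw [hpva]; ring
  -- a ≠ 0
  have ha0 : a ≠ 0 := by
    intro h
    have hpv0 : pv x 0 = 0 := by rw [hpva, h, mul_zero]
    have hz := eigen_zero hd2 (by intro h'; exact hμ1' (by rw [h']; ring)) x heig hpv0
    rw [Finset.sum_congr rfl (fun w _ => by rw [hz w]; norm_num : ∀ w ∈ Finset.univ,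
      (x w)^2 = 0)] at hx1
    simp at hx1
  -- the transplanted vector y
  set y : Fin (k-1) ⊕ Fin (d+1) ⊕ Fin l → ℝ :=
    Sum.elim (fun _ => a)
      (Sum.elim (fun j : Fin (d+1) => if (j:ℕ) = 0 then a else pv x ((j:ℕ) - 1))
        (fun q : Fin l => x (Sum.inr (Sum.inr q)))) with hy
  have hpy0 : pv y 0 = a := by
    rw [pv, dif_pos (by omega : 0 < d+1)]
    simp [hy]
  have hpy : ∀ m', pv y (m'+1) = pv x m' := by
    intro m'
    by_cases hm' : m' < d
    · rw [pv, dif_pos (by omega : m'+1 < d+1)]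
      simp only [hy, Sum.elim_inr, Sum.elim_inl]
      rw [if_neg (by omega)]
      congr 1
    · rw [pv, dif_neg (by omega : ¬(m'+1 < d+1)), pv, dif_neg hm']
  have hkc : ((k-1:ℕ):ℝ) = (k:ℝ) - 1 := by
    rw [Nat.cast_sub (by omega : 1 ≤ k)]; simp
  -- sums agree
  have hysum : ∑ w, y w = ∑ w, x w := by
    rw [Fintype.sum_sum_type, Fintype.sum_sum_type]
    rw [Fintype.sum_sum_type (f := x), Fintype.sum_sum_type]
    have e1 : ∑ _i : Fin (k-1), y (Sum.inl _i) = ((k:ℝ)-1) * a := by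
      simp [hy, ← hkc] <;> ring
    have e2 : ∑ i : Fin k, x (Sum.inl i) = (k:ℝ) * a := by
      rw [Finset.sum_congr rfl fun i _ => hpend i, Finset.sum_const, Finset.card_univ,
        Fintype.card_fin, nsmul_eq_mul]
    have e3 : ∑ j : Fin (d+1), y (Sum.inr (Sum.inl j))
        = a + ∑ m' ∈ Finset.range d, pv x m' := by
      rw [sum_path_f y (fun r => r), Finset.sum_range_succ']
      rw [Finset.sum_congr rfl (fun m' _ => hpy m'), hpy0]
      ring
    have e4 : ∑ j : Fin d, x (Sum.inr (Sum.inl j)) = ∑ m' ∈ Finset.range d, pv x m' :=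
      sum_path_f x (fun r => r)
    have e5 : ∑ q : Fin l, y (Sum.inr (Sum.inr q)) = ∑ q : Fin l, x (Sum.inr (Sum.inr q)) := by
      apply Finset.sum_congr rfl; intro q _; simp [hy]
    rw [e1, e2, e3, e4, e5]
    ring
  have hysumsq : ∑ w, (y w)^2 = ∑ w, (x w)^2 := by
    rw [Fintype.sum_sum_type, Fintype.sum_sum_type]
    rw [Fintype.sum_sum_type (f := fun w => (x w)^2), Fintype.sum_sum_type]
    have e1 : ∑ _i : Fin (k-1), (y (Sum.inl _i))^2 = ((k:ℝ)-1) * a^2 := by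
      simp [hy, ← hkc] <;> ring
    have e2 : ∑ i : Fin k, (x (Sum.inl i))^2 = (k:ℝ) * a^2 := by
      rw [Finset.sum_congr rfl fun i _ => by rw [hpend i], Finset.sum_const, Finset.card_univ,
        Fintype.card_fin, nsmul_eq_mul]
    have e3 : ∑ j : Fin (d+1), (y (Sum.inr (Sum.inl j)))^2
        = a^2 + ∑ m' ∈ Finset.range d, (pv x m')^2 := by
      rw [sum_path_f y (fun r => r^2), Finset.sum_range_succ']
      rw [Finset.sum_congr rfl (fun m' _ => by rw [hpy m']), hpy0]
      ring
    have e4 : ∑ j : Fin d, (x (Sum.inr (Sum.inl j)))^2 = ∑ m' ∈ Finset.range d, (pv x m')^2 :=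
      sum_path_f x (fun r => r^2)
    have e5 : ∑ q : Fin l, (y (Sum.inr (Sum.inr q)))^2
        = ∑ q : Fin l, (x (Sum.inr (Sum.inr q)))^2 := by
      apply Finset.sum_congr rfl; intro q _; simp [hy]
    rw [e1, e2, e3, e4, e5]
    ring
  -- quadratic forms
  obtain ⟨e, rfl⟩ : ∃ e, d = e + 1 := ⟨d - 1, by omega⟩
  have hQy : lapQ (Tkld (k-1) l (e+1+1)) y
      = lapQ (Tkld k l (e+1)) x - ((k:ℝ)-1) * (μ*a)^2 := by
    rw [lapQ_Tkld (k-1) l (e+1+1) (by omega) y, lapQ_Tkld k l (e+1) (by omega) x]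
    have f1 : ∑ i : Fin (k-1), (y (Sum.inl i) - pv y 0)^2 = 0 := by
      apply Finset.sum_eq_zero; intro i _
      rw [hpy0, show y (Sum.inl i) = a from rfl]
      ring
    have f2 : ∑ i : Fin k, (x (Sum.inl i) - pv x 0)^2 = (k:ℝ) * (μ*a)^2 := by
      rw [Finset.sum_congr rfl fun i _ => by rw [hpend i, show a - pv x 0 = μ*a from hμa]]
      rw [Finset.sum_const, Finset.card_univ, Fintype.card_fin, nsmul_eq_mul]
    have f3 : ∑ m' ∈ Finset.range (e+1+1-1), (pv y m' - pv y (m'+1))^2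
        = (μ*a)^2 + ∑ m' ∈ Finset.range (e+1-1), (pv x m' - pv x (m'+1))^2 := by
      rw [show e+1+1-1 = e+1 from rfl, show e+1-1 = e from rfl, Finset.sum_range_succ']
      rw [Finset.sum_congr rfl (fun m' _ => by rw [hpy m', hpy (m'+1)]), hpy0, hpy 0]
      rw [show a - pv x 0 = μ*a from hμa]
      ring
    have f4 : ∑ q : Fin l, (y (Sum.inr (Sum.inr q)) - pv y (e+1+1-1))^2
        = ∑ q : Fin l, (x (Sum.inr (Sum.inr q)) - pv x (e+1-1))^2 := by
      apply Finset.sum_congr rfl; intro q _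
      rw [show e+1+1-1 = e+1 from rfl, show e+1-1 = e from rfl, hpy e,
        show y (Sum.inr (Sum.inr q)) = x (Sum.inr (Sum.inr q)) from rfl]
    rw [f1, f2, f3, f4]
    ring
  have hQyval : lapQ (Tkld (k-1) l (e+1+1)) y = μ - ((k:ℝ)-1) * (μ*a)^2 := by
    rw [hQy, hxQ]
  have hle := algConn_le (Tkld (k-1) l (e+1+1)) y (by rw [hysum]; exact hx0)
    (by rw [hysumsq]; exact hx1)
  rw [hQyval] at hle
  have hstrict : ((k:ℝ)-1) * (μ*a)^2 > 0 := by
    apply mul_pos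
    · have : (2:ℝ) ≤ (k:ℝ) := by exact_mod_cast hk
      linarith
    · positivity
  calc algConn (Tkld (k-1) l (e+1+1)) ≤ μ - ((k:ℝ)-1) * (μ*a)^2 := hle
    _ < μ := by linarith

/-- for `k ≥ 2`, `l ≥ 1`, `d ≥ 1`, `α(T(k,l,d)) > α(T(k−1,l,d+1))`. -/
theorem algConn_Tkld_gt_left (k l d : ℕ) (hk : 2 ≤ k) (hl : 1 ≤ l) (hd : 1 ≤ d) :
    algConn (Tkld k l d) > algConn (Tkld (k - 1) l (d + 1)) := by
  rcases eq_or_lt_of_le hd with hd1 | hd2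
  · subst hd1
    exact lt_of_lt_of_le (upper_d1 k l hk hl) (algConn_ge_one k l (by omega))
  · exact main_ge2 k l d hk hl hd2
end

section
/- Let γ1, γ2, n be positive integers with γ1 < γ2 and n ≥ 3γ2 + 1. Then α(T_{3γ1−2}) > α(T_{3γ2−2}), where both trees have order n. -/
open Finset Matrix

noncomputable local instance graphDec {W : Type*} (G : SimpleGraph W) : DecidableRel G.Adj :=
  Classical.decRel G.Adj

section General

variable {V : Type*} [Fintype V] [DecidableEq V]

/-- The feasible set whose infimum is `algConn`. -/
def QSet (G : SimpleGraph V) : Set ℝ :=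
  { r : ℝ | ∃ x : V → ℝ, (∑ v, x v) = 0 ∧ (∑ v, (x v) ^ 2) = 1 ∧
      r = dotProduct x ((G.lapMatrix ℝ).mulVec x) }

lemma algConn_eq_sInf (G : SimpleGraph V) : algConn G = sInf (QSet G) := rfl

lemma QSet_nonneg (G : SimpleGraph V) {r : ℝ} (h : r ∈ QSet G) : 0 ≤ r := by
  obtain ⟨x, -, -, rfl⟩ := h
  have := (SimpleGraph.posSemidef_lapMatrix ℝ G).dotProduct_mulVec_nonneg x
  simpa using this

lemma bddBelow_QSet (G : SimpleGraph V) : BddBelow (QSet G) :=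
  ⟨0, fun _ h => QSet_nonneg G h⟩

lemma algConn_le_s6 (G : SimpleGraph V) {r : ℝ} (h : r ∈ QSet G) : algConn G ≤ r :=
  (algConn_eq_sInf G) ▸ csInf_le (bddBelow_QSet G) h

lemma le_algConn (G : SimpleGraph V) {c : ℝ} (hne : (QSet G).Nonempty)
    (h : ∀ r ∈ QSet G, c ≤ r) : c ≤ algConn G :=
  (algConn_eq_sInf G) ▸ le_csInf hne h

lemma euclid_inner_eq (a b : EuclideanSpace ℝ V) :
    (inner ℝ a b : ℝ) = ∑ v, a v * b v := by
  simp [PiLp.inner_apply, RCLike.inner_apply, starRingEnd_apply]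
  exact Finset.sum_congr rfl (fun v _ => mul_comm _ _)

lemma euclid_normsq_eq (a : EuclideanSpace ℝ V) : ‖a‖ ^ 2 = ∑ v, a v ^ 2 := by
  rw [← real_inner_self_eq_norm_sq, euclid_inner_eq]
  simp [sq]

lemma inner_toEuclideanLin (M : Matrix V V ℝ) (a : EuclideanSpace ℝ V) :
    (inner ℝ ((Matrix.toEuclideanLin M) a) a : ℝ) =
      dotProduct (fun v => a v) (M *ᵥ fun v => a v) := by
  rw [euclid_inner_eq]
  have h : ∀ v, ((Matrix.toEuclideanLin M) a) v = (M *ᵥ fun w => a w) v := fun _ => rfl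
  simp_rw [h, dotProduct]
  exact Finset.sum_congr rfl (fun v _ => mul_comm _ _)

lemma exists_fiedler_s6 (G : SimpleGraph V) (hV : 1 < Fintype.card V) :
    ∃ x : V → ℝ, (∑ v, x v) = 0 ∧ (∑ v, (x v) ^ 2) = 1 ∧
      (G.lapMatrix ℝ).mulVec x = algConn G • x := by
  classical
  set L : Matrix V V ℝ := G.lapMatrix ℝ with hL
  let F : EuclideanSpace ℝ V →ₗ[ℝ] ℝ :=
    { toFun := fun x => ∑ v, x v
      map_add' := by intro a b; exact Finset.sum_add_distrib
      map_smul' := by intro c a; simp [Finset.mul_sum] }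
  let W : Submodule ℝ (EuclideanSpace ℝ V) := LinearMap.ker F
  have hFdef : ∀ a : EuclideanSpace ℝ V, F a = ∑ v, a v := fun a => rfl
  have hrow : ∀ u : V, ∑ v, L u v = 0 := by
    intro u
    have h1 : (L *ᵥ (fun _ => 1)) u = 0 := by
      rw [hL, G.lapMatrix_mulVec_const_eq_zero]; rfl
    simpa [Matrix.mulVec, dotProduct] using h1
  have hsymL : ∀ u v : V, L u v = L v u := by
    intro u v
    have h := G.isSymm_lapMatrix (R := ℝ)
    have h2 := congrFun (congrFun h u) v
    simpa [Matrix.transpose_apply] using h2.symm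
  have hmaps : ∀ a : EuclideanSpace ℝ V, a ∈ W → Matrix.toEuclideanLin L a ∈ W := by
    intro a _
    rw [LinearMap.mem_ker, hFdef]
    have : ∀ v, (Matrix.toEuclideanLin L a) v = ∑ u, L v u * a u := by
      intro v; rfl
    simp_rw [this]
    rw [Finset.sum_comm]
    have : ∀ u, ∑ v, L v u * a u = 0 := by
      intro u
      rw [← Finset.sum_mul]
      have : ∑ v, L v u = 0 := by
        simp_rw [fun v => hsymL v u]
        exact hrow u
      rw [this, zero_mul]
    simp_rw [this]
    simp
  let T := (Matrix.toEuclideanLin L).restrict hmaps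
  have herm : L.IsHermitian := (SimpleGraph.posSemidef_lapMatrix ℝ G).1
  have hsym : T.IsSymmetric :=
    (Matrix.isHermitian_iff_isSymmetric.1 herm).restrict_invariant hmaps
  -- W is nontrivial
  obtain ⟨a, b, hab⟩ := Fintype.exists_pair_of_one_lt_card hV
  let z : EuclideanSpace ℝ V :=
    (WithLp.equiv 2 (V → ℝ)).symm (fun v => (if v = a then 1 else 0) - (if v = b then 1 else 0))
  have hz_mem : z ∈ W := by
    rw [LinearMap.mem_ker, hFdef]
    simp [z, Finset.sum_sub_distrib, hab]
  have hz_ne : z ≠ 0 := by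
    intro h
    have := congrFun (congrArg (WithLp.equiv 2 (V → ℝ)) h) a
    simp [z, hab] at this
  haveI : Nontrivial W := ⟨⟨⟨z, hz_mem⟩, 0, by
    intro h
    exact hz_ne (by simpa using congrArg (Subtype.val) h)⟩⟩
  haveI : Nonempty { x : W // x ≠ 0 } :=
    ⟨⟨⟨z, hz_mem⟩, fun h => hz_ne (by simpa using congrArg Subtype.val h)⟩⟩
  set μ : ℝ := ⨅ x : { x : W // x ≠ 0 }, RCLike.re (inner ℝ (T x) (x : W) : ℝ) / ‖(x : W)‖ ^ 2
    with hμ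
  have hev : Module.End.HasEigenvalue T (μ : ℝ) := by
    exact hsym.hasEigenvalue_iInf_of_finiteDimensional
  obtain ⟨v₀, hv₀⟩ := hev.exists_hasEigenvector
  -- normalized eigenvector
  have hv₀ne : v₀ ≠ 0 := hv₀.2
  let u : W := (‖v₀‖⁻¹ : ℝ) • v₀
  have hu_norm : ‖u‖ = 1 := norm_smul_inv_norm hv₀ne
  have hTu : T u = μ • u := by
    have h1 : T v₀ = μ • v₀ := hv₀.apply_eq_smul
    show T ((‖v₀‖⁻¹ : ℝ) • v₀) = _
    rw [LinearMap.map_smul, h1, smul_comm]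
  let x : V → ℝ := fun v => (u : EuclideanSpace ℝ V) v
  have hsum : ∑ v, x v = 0 := by
    have h := u.2
    rw [LinearMap.mem_ker, hFdef] at h
    exact h
  have hnorm : ∑ v, x v ^ 2 = 1 := by
    have h1 : ‖(u : EuclideanSpace ℝ V)‖ = 1 := by
      rw [← hu_norm]; rfl
    have h2 := euclid_normsq_eq (V := V) (u : EuclideanSpace ℝ V)
    rw [h1] at h2
    simpa using h2.symm
  have heigE : (Matrix.toEuclideanLin L) (u : EuclideanSpace ℝ V) =
      μ • ((u : EuclideanSpace ℝ V)) := by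
    have h := congrArg Subtype.val hTu
    rwa [LinearMap.restrict_coe_apply] at h
  have heig : L *ᵥ x = μ • x := by
    funext v
    have h2 : ((Matrix.toEuclideanLin L) (u : EuclideanSpace ℝ V)) v = (L *ᵥ x) v := rfl
    have h3 : ((μ • ((u : EuclideanSpace ℝ V))) : EuclideanSpace ℝ V) v = μ * x v := rfl
    have := congrArg (fun (e : EuclideanSpace ℝ V) => e v) heigE
    simp only [h2, h3] at this
    simpa using this
  have hQx : dotProduct x (L *ᵥ x) = μ := by
    rw [heig]
    have h : dotProduct x (μ • x) = μ * ∑ v, x v ^ 2 := by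
      simp only [dotProduct, Pi.smul_apply, smul_eq_mul, Finset.mul_sum]
      exact Finset.sum_congr rfl (fun v _ => by ring)
    rw [h, hnorm, mul_one]
  have hμmem : μ ∈ QSet G := ⟨x, hsum, hnorm, hQx.symm⟩
  -- lower bound direction
  have hge : μ ≤ algConn G := by
    apply le_algConn G ⟨μ, hμmem⟩
    rintro r ⟨y, hys, hyn, rfl⟩
    set wv : EuclideanSpace ℝ V := (WithLp.equiv 2 (V → ℝ)).symm y with hwv
    have hcoord : ∀ v, wv v = y v := fun _ => rfl
    have hw_mem : wv ∈ W := by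
      rw [LinearMap.mem_ker, hFdef]
      simp_rw [hcoord]
      exact hys
    have hw_ne : (⟨wv, hw_mem⟩ : W) ≠ 0 := by
      intro h
      have h2 : wv = 0 := by simpa using congrArg Subtype.val h
      have h3 : ∀ v, y v = 0 := by
        intro v; rw [← hcoord v, h2]; rfl
      rw [Finset.sum_congr rfl (fun v _ => by rw [h3 v])] at hyn
      simpa using hyn
    have hwnorm : ‖(⟨wv, hw_mem⟩ : W)‖ ^ 2 = 1 := by
      have h1 : ‖(⟨wv, hw_mem⟩ : W)‖ = ‖wv‖ := rfl
      rw [h1, euclid_normsq_eq]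
      simp_rw [hcoord]
      exact hyn
    have hval : RCLike.re (inner ℝ (T ⟨wv, hw_mem⟩) (⟨wv, hw_mem⟩ : W) : ℝ) /
        ‖(⟨wv, hw_mem⟩ : W)‖ ^ 2 = dotProduct y (L *ᵥ y) := by
      rw [hwnorm, div_one, RCLike.re_to_real]
      have h1 : (inner ℝ (T ⟨wv, hw_mem⟩) (⟨wv, hw_mem⟩ : W) : ℝ) =
          (inner ℝ ((Matrix.toEuclideanLin L) wv) wv : ℝ) := by
        rw [Submodule.coe_inner, LinearMap.restrict_coe_apply]
      rw [h1, inner_toEuclideanLin]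
      congr 1 <;> funext v <;> simp [hcoord]
    have hbdd : BddBelow (Set.range fun w : { x : W // x ≠ 0 } =>
        RCLike.re (inner ℝ (T ↑w) (↑w : W) : ℝ) / ‖(↑w : W)‖ ^ 2) := by
      refine ⟨0, ?_⟩
      rintro s ⟨w, rfl⟩
      apply div_nonneg _ (sq_nonneg _)
      rw [RCLike.re_to_real]
      have h1 : (inner ℝ (T ↑w) ((↑w : W) : W) : ℝ) =
          (inner ℝ ((Matrix.toEuclideanLin L) ((↑w : W) : EuclideanSpace ℝ V))
            (((↑w : W) : EuclideanSpace ℝ V)) : ℝ) := by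
        rw [Submodule.coe_inner, LinearMap.restrict_coe_apply]
      rw [h1, inner_toEuclideanLin]
      have h2 := (SimpleGraph.posSemidef_lapMatrix ℝ G).dotProduct_mulVec_nonneg (fun v => ((↑w : W) : EuclideanSpace ℝ V) v)
      simpa using h2
    have h := ciInf_le hbdd (⟨⟨wv, hw_mem⟩, hw_ne⟩ : { x : W // x ≠ 0 })
    rw [hμ]
    calc ⨅ x : { x : W // x ≠ 0 }, RCLike.re (inner ℝ (T ↑x) (↑x : W) : ℝ) / ‖(↑x : W)‖ ^ 2
        ≤ _ := h
      _ = dotProduct y (L *ᵥ y) := hval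
  have hle : algConn G ≤ μ := algConn_le_s6 G hμmem
  have hαμ : algConn G = μ := le_antisymm hle hge
  exact ⟨x, hsum, hnorm, by rw [hαμ]; exact heig⟩

lemma dot_smul_self (x : V → ℝ) (c : ℝ) :
    dotProduct x (c • x) = c * ∑ v, x v ^ 2 := by
  simp only [dotProduct, Pi.smul_apply, smul_eq_mul, Finset.mul_sum]
  exact Finset.sum_congr rfl (fun v _ => by ring)

lemma algConn_mem_QSet (G : SimpleGraph V) (hV : 1 < Fintype.card V) :
    algConn G ∈ QSet G := by
  obtain ⟨x, hs, hn, he⟩ := exists_fiedler_s6 G hV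
  exact ⟨x, hs, hn, by rw [he, dot_smul_self, hn, mul_one]⟩

lemma algConn_nonneg (G : SimpleGraph V) (hV : 1 < Fintype.card V) : 0 ≤ algConn G :=
  le_algConn G ⟨_, algConn_mem_QSet G hV⟩ (fun _ hr => QSet_nonneg G hr)

lemma algConn_pos (G : SimpleGraph V) (hV : 1 < Fintype.card V)
    (hc : G.Preconnected) : 0 < algConn G := by
  rcases (algConn_nonneg G hV).lt_or_eq with h | h
  · exact h
  · exfalso
    obtain ⟨x, hs, hn, he⟩ := exists_fiedler_s6 G hV
    rw [← h, zero_smul] at he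
    have hker : Matrix.toLin' (G.lapMatrix ℝ) x = 0 := by
      rw [Matrix.toLin'_apply]; exact he
    have hconst := (G.lapMatrix_mulVec_eq_zero_iff_forall_reachable).mp he
    have : Nonempty V := Fintype.card_pos_iff.mp (by omega)
    obtain ⟨v₀⟩ := this
    have hxv : ∀ v, x v = x v₀ := fun v => hconst v v₀ (hc v v₀)
    have hsum0 : ∑ v, x v = (Fintype.card V : ℝ) * x v₀ := by
      rw [Finset.sum_congr rfl (fun v _ => hxv v)]
      simp [Finset.card_univ, mul_comm]
    rw [hsum0] at hs
    have hx0 : x v₀ = 0 := by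
      have : (Fintype.card V : ℝ) ≠ 0 := by positivity
      exact (mul_eq_zero.mp hs).resolve_left this
    have : ∑ v, x v ^ 2 = 0 := by
      rw [Finset.sum_congr rfl (fun v _ => by rw [hxv v, hx0])]
      simp
    rw [this] at hn
    exact zero_ne_one hn

lemma dot_lap_eq_sum_edges (G : SimpleGraph V) (x : V → ℝ) :
    dotProduct x ((G.lapMatrix ℝ).mulVec x) =
      (∑ i, ∑ j, if G.Adj i j then (x i - x j) ^ 2 else 0) / 2 := by
  rw [← SimpleGraph.lapMatrix_toLinearMap₂' (R := ℝ) G x, Matrix.toLinearMap₂'_apply']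

end General

section TkldFacts

open Sum

variable {k l d : ℕ}

lemma adj_LL (i i' : Fin k) : (Tkld k l d).Adj (inl i) (inl i') ↔ False := Iff.rfl
lemma adj_LP (i : Fin k) (j : Fin d) :
    (Tkld k l d).Adj (inl i) (inr (inl j)) ↔ (j : ℕ) = 0 := Iff.rfl
lemma adj_LR (i : Fin k) (i' : Fin l) :
    (Tkld k l d).Adj (inl i) (inr (inr i')) ↔ False := Iff.rfl
lemma adj_PL (j : Fin d) (i : Fin k) :
    (Tkld k l d).Adj (inr (inl j)) (inl i) ↔ (j : ℕ) = 0 := Iff.rfl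
lemma adj_PP (j j' : Fin d) :
    (Tkld k l d).Adj (inr (inl j)) (inr (inl j')) ↔
      ((j : ℕ) + 1 = (j' : ℕ) ∨ (j' : ℕ) + 1 = (j : ℕ)) := Iff.rfl
lemma adj_PR (j : Fin d) (i : Fin l) :
    (Tkld k l d).Adj (inr (inl j)) (inr (inr i)) ↔ (j : ℕ) + 1 = d := Iff.rfl
lemma adj_RP (i : Fin l) (j : Fin d) :
    (Tkld k l d).Adj (inr (inr i)) (inr (inl j)) ↔ (j : ℕ) + 1 = d := Iff.rfl
lemma adj_RL (i : Fin l) (i' : Fin k) :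
    (Tkld k l d).Adj (inr (inr i)) (inl i') ↔ False := Iff.rfl
lemma adj_RR (i i' : Fin l) :
    (Tkld k l d).Adj (inr (inr i)) (inr (inr i')) ↔ False := Iff.rfl

lemma sum_ite_fin {d : ℕ} (c : ℕ) (f : Fin d → ℝ) :
    (∑ j : Fin d, if (j : ℕ) = c then f j else 0) = if h : c < d then f ⟨c, h⟩ else 0 := by
  split
  · next h =>
    have he : ∀ j : Fin d, ((j : ℕ) = c) = (j = ⟨c, h⟩) := fun j => propext ⟨fun hh => Fin.ext hh, fun hh => by rw [hh]⟩
    simp_rw [he]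
    simp
  · next h =>
    apply Finset.sum_eq_zero
    intro j _
    rw [if_neg]
    omega

lemma ite_or_split {p q : Prop} [Decidable p] [Decidable q] (h : ¬ (p ∧ q)) (t : ℝ) :
    (if p ∨ q then t else 0) = (if p then t else 0) + (if q then t else 0) := by
  by_cases hp : p
  · by_cases hq : q
    · exact absurd ⟨hp, hq⟩ h
    · simp [hp, hq]
  · simp [hp]

lemma Q_Tkld (hd : 0 < d) (x : (Fin k ⊕ Fin d ⊕ Fin l) → ℝ) :
    dotProduct x (((Tkld k l d).lapMatrix ℝ).mulVec x) =
      (∑ i : Fin k, (x (inl i) - x (inr (inl ⟨0, hd⟩))) ^ 2)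
      + (∑ j : Fin d, if h : (j : ℕ) + 1 < d then
          (x (inr (inl j)) - x (inr (inl ⟨(j : ℕ) + 1, h⟩))) ^ 2 else 0)
      + (∑ i : Fin l, (x (inr (inr i)) - x (inr (inl ⟨d - 1, Nat.sub_lt hd one_pos⟩))) ^ 2) := by
  rw [dot_lap_eq_sum_edges]
  simp only [Fintype.sum_sum_type, adj_LL, adj_LP, adj_LR, adj_PL, adj_PP, adj_PR, adj_RP,
    adj_RL, adj_RR, if_false, Finset.sum_const_zero, Finset.sum_add_distrib, zero_add, add_zero]
  have hc0 : ∀ m : ℕ, ((m : ℕ) = 0) = ((m : ℕ) = 0) := fun m => rfl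
  have hB1 : (∑ j : Fin d, ∑ i : Fin k,
      if (j : ℕ) = 0 then (x (inr (inl j)) - x (inl i)) ^ 2 else 0)
      = ∑ i : Fin k, (x (inl i) - x (inr (inl ⟨0, hd⟩))) ^ 2 := by
    rw [Finset.sum_comm]
    refine Finset.sum_congr rfl (fun i _ => ?_)
    rw [sum_ite_fin 0 (fun j => (x (inr (inl j)) - x (inl i)) ^ 2), dif_pos hd]
    ring
  have hB2 : (∑ i : Fin k, ∑ j : Fin d,
      if (j : ℕ) = 0 then (x (inl i) - x (inr (inl j))) ^ 2 else 0)
      = ∑ i : Fin k, (x (inl i) - x (inr (inl ⟨0, hd⟩))) ^ 2 := by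
    refine Finset.sum_congr rfl (fun i _ => ?_)
    rw [sum_ite_fin 0 (fun j => (x (inl i) - x (inr (inl j))) ^ 2), dif_pos hd]
  have hYdef : ∀ j : Fin d, (∑ j' : Fin d,
      if (j' : ℕ) = (j : ℕ) + 1 then (x (inr (inl j)) - x (inr (inl j'))) ^ 2 else 0)
      = (if h : (j : ℕ) + 1 < d then
          (x (inr (inl j)) - x (inr (inl ⟨(j : ℕ) + 1, h⟩))) ^ 2 else 0) := by
    intro j
    rw [sum_ite_fin ((j : ℕ) + 1) (fun j' => (x (inr (inl j)) - x (inr (inl j'))) ^ 2)]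
  have hB3 : (∑ j : Fin d, ∑ j' : Fin d,
      if (j : ℕ) + 1 = (j' : ℕ) ∨ (j' : ℕ) + 1 = (j : ℕ)
        then (x (inr (inl j)) - x (inr (inl j'))) ^ 2 else 0)
      = 2 * ∑ j : Fin d, if h : (j : ℕ) + 1 < d then
          (x (inr (inl j)) - x (inr (inl ⟨(j : ℕ) + 1, h⟩))) ^ 2 else 0 := by
    have hsplit : ∀ j j' : Fin d,
        (if (j : ℕ) + 1 = (j' : ℕ) ∨ (j' : ℕ) + 1 = (j : ℕ)
          then (x (inr (inl j)) - x (inr (inl j'))) ^ 2 else 0)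
        = (if (j : ℕ) + 1 = (j' : ℕ) then (x (inr (inl j)) - x (inr (inl j'))) ^ 2 else 0)
          + (if (j' : ℕ) + 1 = (j : ℕ) then (x (inr (inl j)) - x (inr (inl j'))) ^ 2 else 0) :=
      fun j j' => ite_or_split (by omega) _
    simp_rw [hsplit, Finset.sum_add_distrib]
    have h1 : (∑ j : Fin d, ∑ j' : Fin d,
        if (j : ℕ) + 1 = (j' : ℕ) then (x (inr (inl j)) - x (inr (inl j'))) ^ 2 else 0)
        = ∑ j : Fin d, if h : (j : ℕ) + 1 < d then
          (x (inr (inl j)) - x (inr (inl ⟨(j : ℕ) + 1, h⟩))) ^ 2 else 0 := by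
      refine Finset.sum_congr rfl (fun j _ => ?_)
      rw [← hYdef j]
      refine Finset.sum_congr rfl (fun j' _ => ?_)
      congr 1
      exact propext eq_comm
    have h2 : (∑ j : Fin d, ∑ j' : Fin d,
        if (j' : ℕ) + 1 = (j : ℕ) then (x (inr (inl j)) - x (inr (inl j'))) ^ 2 else 0)
        = ∑ j : Fin d, if h : (j : ℕ) + 1 < d then
          (x (inr (inl j)) - x (inr (inl ⟨(j : ℕ) + 1, h⟩))) ^ 2 else 0 := by
      rw [Finset.sum_comm]
      refine Finset.sum_congr rfl (fun j' _ => ?_)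
      have e1 : (∑ j : Fin d,
          if (j' : ℕ) + 1 = (j : ℕ) then (x (inr (inl j)) - x (inr (inl j'))) ^ 2 else 0)
          = ∑ j : Fin d,
          if (j : ℕ) = (j' : ℕ) + 1 then (x (inr (inl j)) - x (inr (inl j'))) ^ 2 else 0 := by
        refine Finset.sum_congr rfl (fun j _ => ?_)
        congr 1
        exact propext eq_comm
      rw [e1, sum_ite_fin ((j' : ℕ) + 1) (fun j => (x (inr (inl j)) - x (inr (inl j'))) ^ 2)]
      split
      · next h => ring
      · rfl
    rw [h1, h2]
    ring
  have hc2 : ∀ m : ℕ, ((m : ℕ) + 1 = d) = (m = d - 1) := fun m => propext (by omega)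
  have hB4 : (∑ r : Fin l, ∑ j : Fin d,
      if (j : ℕ) + 1 = d then (x (inr (inr r)) - x (inr (inl j))) ^ 2 else 0)
      = ∑ i : Fin l, (x (inr (inr i)) - x (inr (inl ⟨d - 1, Nat.sub_lt hd one_pos⟩))) ^ 2 := by
    refine Finset.sum_congr rfl (fun r _ => ?_)
    simp_rw [hc2]
    rw [sum_ite_fin (d - 1) (fun j => (x (inr (inr r)) - x (inr (inl j))) ^ 2),
      dif_pos (Nat.sub_lt hd one_pos)]
  have hB5 : (∑ j : Fin d, ∑ r : Fin l,
      if (j : ℕ) + 1 = d then (x (inr (inl j)) - x (inr (inr r))) ^ 2 else 0)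
      = ∑ i : Fin l, (x (inr (inr i)) - x (inr (inl ⟨d - 1, Nat.sub_lt hd one_pos⟩))) ^ 2 := by
    rw [Finset.sum_comm]
    refine Finset.sum_congr rfl (fun r _ => ?_)
    simp_rw [hc2]
    rw [sum_ite_fin (d - 1) (fun j => (x (inr (inl j)) - x (inr (inr r))) ^ 2),
      dif_pos (Nat.sub_lt hd one_pos)]
    ring
  rw [hB1, hB2, hB3, hB4, hB5]
  ring

lemma sum_ite_const {β : Type*} [Fintype β] {p : Prop} [Decidable p] (f : β → ℝ) :
    (∑ b : β, if p then f b else 0) = if p then ∑ b : β, f b else 0 := by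
  split <;> simp

end TkldFacts

section LapApply

variable {V : Type*} [Fintype V] [DecidableEq V]

lemma lap_mulVec_eq (G : SimpleGraph V) (x : V → ℝ) (v : V) :
    ((G.lapMatrix ℝ).mulVec x) v = ∑ u, if G.Adj v u then x v - x u else 0 := by
  rw [SimpleGraph.lapMatrix_mulVec_apply]
  have h1 : (G.degree v : ℝ) * x v = ∑ u, if G.Adj v u then x v else 0 := by
    rw [SimpleGraph.degree_eq_sum_if_adj (R := ℝ), Finset.sum_mul]
    exact Finset.sum_congr rfl (fun u _ => by split <;> simp
    )
  have h2 : (∑ u ∈ G.neighborFinset v, x u) = ∑ u, if G.Adj v u then x u else 0 := by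
    rw [← Finset.sum_filter]
    congr 1
    ext u
    simp [SimpleGraph.mem_neighborFinset]
  rw [h1, h2, ← Finset.sum_sub_distrib]
  exact Finset.sum_congr rfl (fun u _ => by split <;> simp)

end LapApply

section Eigen

open Sum

variable {k l d : ℕ} {α : ℝ} {x : (Fin k ⊕ Fin d ⊕ Fin l) → ℝ}

lemma eig_apply (heig : ((Tkld k l d).lapMatrix ℝ).mulVec x = α • x)
    (v : Fin k ⊕ Fin d ⊕ Fin l) :
    α * x v = ∑ u, if (Tkld k l d).Adj v u then x v - x u else 0 := by
  have h := congrFun heig v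
  rw [lap_mulVec_eq] at h
  simpa using h.symm

lemma eig_pendL (heig : ((Tkld k l d).lapMatrix ℝ).mulVec x = α • x)
    (hd : 0 < d) (i : Fin k) :
    α * x (inl i) = x (inl i) - x (inr (inl ⟨0, hd⟩)) := by
  rw [eig_apply heig (inl i)]
  simp only [Fintype.sum_sum_type, adj_LL, adj_LP, adj_LR, if_false,
    Finset.sum_const_zero, zero_add, add_zero]
  rw [sum_ite_fin 0 (fun j => x (inl i) - x (inr (inl j))), dif_pos hd]

lemma eig_pendR (heig : ((Tkld k l d).lapMatrix ℝ).mulVec x = α • x)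
    (hd : 0 < d) (r : Fin l) :
    α * x (inr (inr r)) = x (inr (inr r)) - x (inr (inl ⟨d - 1, Nat.sub_lt hd one_pos⟩)) := by
  rw [eig_apply heig (inr (inr r))]
  simp only [Fintype.sum_sum_type, adj_RL, adj_RP, adj_RR, if_false,
    Finset.sum_const_zero, zero_add, add_zero]
  have hc2 : ∀ m : ℕ, ((m : ℕ) + 1 = d) = (m = d - 1) := fun m => propext (by omega)
  simp_rw [hc2]
  rw [sum_ite_fin (d - 1) (fun j => x (inr (inr r)) - x (inr (inl j))),
    dif_pos (Nat.sub_lt hd one_pos)]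

lemma eig_path (heig : ((Tkld k l d).lapMatrix ℝ).mulVec x = α • x) (j : Fin d) :
    α * x (inr (inl j)) =
      (if (j : ℕ) = 0 then (k : ℝ) * x (inr (inl j)) - ∑ i : Fin k, x (inl i) else 0)
      + (((if h : (j : ℕ) + 1 < d then x (inr (inl j)) - x (inr (inl ⟨(j : ℕ) + 1, h⟩)) else 0)
        + (if 0 < (j : ℕ) then x (inr (inl j)) -
            x (inr (inl ⟨(j : ℕ) - 1, Nat.lt_of_le_of_lt (Nat.sub_le _ _) j.isLt⟩)) else 0))
      + (if (j : ℕ) + 1 = d then (l : ℝ) * x (inr (inl j)) - ∑ r : Fin l, x (inr (inr r)) else 0))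
    := by
  rw [eig_apply heig (inr (inl j))]
  simp only [Fintype.sum_sum_type, adj_PL, adj_PP, adj_PR]
  congr 1
  · -- pendant-left block
    rw [sum_ite_const (fun i => x (inr (inl j)) - x (inl i))]
    split
    · rw [Finset.sum_sub_distrib, Finset.sum_const, Finset.card_univ, Fintype.card_fin]
      simp [mul_comm]
    · rfl
  congr 1
  · -- path block
    have hsplit : ∀ j' : Fin d,
        (if (j : ℕ) + 1 = (j' : ℕ) ∨ (j' : ℕ) + 1 = (j : ℕ)
          then x (inr (inl j)) - x (inr (inl j')) else 0)
        = (if (j : ℕ) + 1 = (j' : ℕ) then x (inr (inl j)) - x (inr (inl j')) else 0)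
          + (if (j' : ℕ) + 1 = (j : ℕ) then x (inr (inl j)) - x (inr (inl j')) else 0) :=
      fun j' => ite_or_split (by omega) _
    simp_rw [hsplit, Finset.sum_add_distrib]
    congr 1
    · have he : ∀ j' : Fin d, ((j : ℕ) + 1 = (j' : ℕ)) = ((j' : ℕ) = (j : ℕ) + 1) :=
        fun j' => propext eq_comm
      simp_rw [he]
      rw [sum_ite_fin ((j : ℕ) + 1) (fun j' => x (inr (inl j)) - x (inr (inl j')))]
    · by_cases h0 : 0 < (j : ℕ)
      · have he : ∀ j' : Fin d, (((j' : ℕ) + 1 = (j : ℕ))) = ((j' : ℕ) = (j : ℕ) - 1) :=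
          fun j' => propext (by omega)
        simp_rw [he]
        rw [sum_ite_fin ((j : ℕ) - 1) (fun j' => x (inr (inl j)) - x (inr (inl j'))),
          dif_pos (Nat.lt_of_le_of_lt (Nat.sub_le _ _) j.isLt), if_pos h0]
      · rw [if_neg h0]
        apply Finset.sum_eq_zero
        intro j' _
        rw [if_neg]
        omega
  · -- right block
    rw [sum_ite_const (fun r => x (inr (inl j)) - x (inr (inr r)))]
    split
    · rw [Finset.sum_sub_distrib, Finset.sum_const, Finset.card_univ, Fintype.card_fin]
      simp [mul_comm]
    · rfl

end Eigen

section Eigen2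

open Sum

variable {k l d : ℕ} {α : ℝ} {x : (Fin k ⊕ Fin d ⊕ Fin l) → ℝ}

lemma propagate_zero (hd : 0 < d) (hα1 : α ≠ 1)
    (heig : ((Tkld k l d).lapMatrix ℝ).mulVec x = α • x)
    (hL0 : ∀ i : Fin k, x (inl i) = 0) (hP0 : x (inr (inl ⟨0, hd⟩)) = 0) :
    x = 0 := by
  have hpath : ∀ m : ℕ, ∀ h : m < d, x (inr (inl ⟨m, h⟩)) = 0 := by
    intro m
    induction m using Nat.strong_induction_on with
    | _ m ih =>
      intro h
      match m, ih, h with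
      | 0, _, h => exact hP0
      | m + 1, ih, h =>
        have hm : m < d := by omega
        have he := eig_path heig ⟨m, hm⟩
        have hxm : x (inr (inl ⟨m, hm⟩)) = 0 := ih m (by omega) hm
        simp only [Fin.val_mk] at he
        rw [hxm, mul_zero] at he
        have hnd : ¬ (m + 1 = d) := by omega
        rw [if_neg hnd, dif_pos (show m + 1 < d from h)] at he
        have hA : (if m = 0 then (k : ℝ) * 0 - ∑ i : Fin k, x (inl i) else 0) = 0 := by
          split
          · rw [Finset.sum_congr rfl (fun i _ => hL0 i)]
            simp
          · rfl
        rw [hA] at he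
        have hB : (if 0 < m then 0 -
            x (inr (inl ⟨m - 1, Nat.lt_of_le_of_lt (Nat.sub_le _ _) (Fin.mk m hm).isLt⟩))
              else 0) = 0 := by
          split
          · next h0 =>
            rw [ih (m - 1) (by omega) (by omega)]
            simp
          · rfl
        rw [hB] at he
        have : x (inr (inl ⟨m + 1, h⟩)) = 0 := by linarith
        exact this
  have hP : ∀ j : Fin d, x (inr (inl j)) = 0 := by
    intro j
    have := hpath j.1 j.2
    simpa [Fin.eta] using this
  have hR : ∀ r : Fin l, x (inr (inr r)) = 0 := by
    intro r
    have he := eig_pendR heig hd r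
    rw [hP _] at he
    have h2 : (α - 1) * x (inr (inr r)) = 0 := by linarith
    rcases mul_eq_zero.mp h2 with h3 | h3
    · exact absurd (by linarith : α = 1) hα1
    · exact h3
  funext v
  rcases v with i | j | r
  · exact hL0 i
  · exact hP j
  · exact hR r

lemma Tkld_preconnected (hd : 0 < d) : (Tkld k l d).Preconnected := by
  have hpath : ∀ m : ℕ, ∀ h : m < d,
      (Tkld k l d).Reachable (inr (inl ⟨m, h⟩)) (inr (inl ⟨0, hd⟩)) := by
    intro m
    induction m with
    | zero => intro h; exact SimpleGraph.Reachable.refl _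
    | succ m ih =>
      intro h
      have hm : m < d := by omega
      have hadj : (Tkld k l d).Adj (inr (inl ⟨m + 1, h⟩)) (inr (inl ⟨m, hm⟩)) :=
        (adj_PP _ _).mpr (Or.inr rfl)
      exact hadj.reachable.trans (ih hm)
  have hto : ∀ v : Fin k ⊕ Fin d ⊕ Fin l, (Tkld k l d).Reachable v (inr (inl ⟨0, hd⟩)) := by
    intro v
    rcases v with i | j | r
    · exact ((adj_LP i ⟨0, hd⟩).mpr rfl).reachable
    · have := hpath j.1 j.2
      simpa [Fin.eta] using this
    · have hadj : (Tkld k l d).Adj (inr (inr r)) (inr (inl ⟨d - 1, Nat.sub_lt hd one_pos⟩)) :=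
        (adj_RP _ _).mpr (by simp; omega)
      exact hadj.reachable.trans (hpath (d - 1) _)
  intro u v
  exact (hto u).trans (hto v).symm

end Eigen2

section Upper

open Sum

variable {k l d : ℕ}

lemma ite_sub_const {c : Prop} [Decidable c] (u v : ℝ) :
    (if c then u else v) = (if c then u - v else 0) + v := by split <;> ring

lemma algConn_Tkld_le (k l d : ℕ) (hk : 1 ≤ k) (hd : 2 ≤ d) :
    algConn (Tkld k l d) ≤
      (((k : ℝ) + 1) + ((l : ℝ) + (d : ℝ) - 1)) / ((((k : ℝ) + 1)) * ((l : ℝ) + (d : ℝ) - 1)) := by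
  have hd0 : 0 < d := by omega
  set a : ℝ := (k : ℝ) + 1 with ha
  set b : ℝ := (l : ℝ) + (d : ℝ) - 1 with hb
  have hdr : (2 : ℝ) ≤ (d : ℝ) := by exact_mod_cast hd
  have hlr : (0 : ℝ) ≤ (l : ℝ) := Nat.cast_nonneg l
  have hkr : (1 : ℝ) ≤ (k : ℝ) := by exact_mod_cast hk
  have hapos : 0 < a := by rw [ha]; linarith
  have hbpos : 0 < b := by rw [hb]; linarith
  set z : (Fin k ⊕ Fin d ⊕ Fin l) → ℝ :=
    Sum.elim (fun _ => b) (Sum.elim (fun j => if (j : ℕ) = 0 then b else -a) (fun _ => -a))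
    with hz
  have hz_sum : ∑ v, z v = 0 := by
    rw [hz]
    simp only [Fintype.sum_sum_type, Sum.elim_inl, Sum.elim_inr]
    rw [Finset.sum_const, Finset.sum_const, Finset.card_univ, Finset.card_univ,
      Fintype.card_fin, Fintype.card_fin]
    have hmid : ∑ j : Fin d, (if (j : ℕ) = 0 then b else -a)
        = (b - -a) + (d : ℝ) * (-a) := by
      simp_rw [ite_sub_const b (-a)]
      rw [Finset.sum_add_distrib, sum_ite_fin 0 (fun _ => b - -a), dif_pos hd0,
        Finset.sum_const, Finset.card_univ, Fintype.card_fin]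
      simp
    rw [hmid]
    simp only [nsmul_eq_mul]
    rw [ha, hb]
    ring
  have hz_sq : ∑ v, z v ^ 2 = a * b * (a + b) := by
    rw [hz]
    simp only [Fintype.sum_sum_type, Sum.elim_inl, Sum.elim_inr]
    have hpt : ∀ j : Fin d, (if (j : ℕ) = 0 then b else -a) ^ 2
        = (if (j : ℕ) = 0 then b ^ 2 - a ^ 2 else 0) + a ^ 2 := by
      intro j; split <;> ring
    simp_rw [hpt]
    rw [Finset.sum_add_distrib, sum_ite_fin 0 (fun _ => b ^ 2 - a ^ 2), dif_pos hd0]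
    rw [Finset.sum_const, Finset.sum_const, Finset.sum_const, Finset.card_univ,
      Finset.card_univ, Finset.card_univ, Fintype.card_fin, Fintype.card_fin, Fintype.card_fin]
    simp only [nsmul_eq_mul]
    rw [ha, hb]
    ring
  have hz_Q : dotProduct z (((Tkld k l d).lapMatrix ℝ).mulVec z) = (a + b) ^ 2 := by
    rw [Q_Tkld hd0]
    have h1 : ∑ i : Fin k, (z (inl i) - z (inr (inl ⟨0, hd0⟩))) ^ 2 = 0 := by
      apply Finset.sum_eq_zero
      intro i _
      rw [hz]
      simp
    have h3 : ∑ i : Fin l,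
        (z (inr (inr i)) - z (inr (inl ⟨d - 1, Nat.sub_lt hd0 one_pos⟩))) ^ 2 = 0 := by
      apply Finset.sum_eq_zero
      intro i _
      rw [hz]
      have : ¬ ((d - 1 : ℕ) = 0) := by omega
      simp [this]
    have h2 : ∑ j : Fin d, (if h : (j : ℕ) + 1 < d then
        (z (inr (inl j)) - z (inr (inl ⟨(j : ℕ) + 1, h⟩))) ^ 2 else 0) = (a + b) ^ 2 := by
      have hpt : ∀ j : Fin d, (if h : (j : ℕ) + 1 < d then
          (z (inr (inl j)) - z (inr (inl ⟨(j : ℕ) + 1, h⟩))) ^ 2 else 0)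
          = (if (j : ℕ) = 0 then (a + b) ^ 2 else 0) := by
        intro j
        by_cases h0 : (j : ℕ) = 0
        · rw [dif_pos (by omega : (j : ℕ) + 1 < d), if_pos h0]
          rw [hz]
          simp only [Sum.elim_inr, Sum.elim_inl, Fin.val_mk]
          rw [if_pos h0, if_neg (by omega : ¬ ((j : ℕ) + 1 = 0))]
          ring
        · rw [if_neg h0]
          by_cases h1 : (j : ℕ) + 1 < d
          · rw [dif_pos h1, hz]
            simp only [Sum.elim_inr, Sum.elim_inl, Fin.val_mk]
            rw [if_neg h0, if_neg (by omega : ¬ ((j : ℕ) + 1 = 0))]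
            ring
          · rw [dif_neg h1]
      simp_rw [hpt]
      rw [sum_ite_fin 0 (fun _ => (a + b) ^ 2), dif_pos hd0]
    rw [h1, h2, h3]
    ring
  -- normalize
  set s : ℝ := a * b * (a + b) with hs
  have hspos : 0 < s := by positivity
  set c : ℝ := (Real.sqrt s)⁻¹ with hc
  have hc2 : c ^ 2 = s⁻¹ := by
    rw [hc, ← Real.sqrt_inv, Real.sq_sqrt (by positivity)]
  have hmem : (a + b) / (a * b) ∈ QSet (Tkld k l d) := by
    refine ⟨c • z, ?_, ?_, ?_⟩
    · simp only [Pi.smul_apply, smul_eq_mul, ← Finset.mul_sum]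
      rw [hz_sum, mul_zero]
    · simp only [Pi.smul_apply, smul_eq_mul, mul_pow, ← Finset.mul_sum]
      rw [hz_sq, hc2, inv_mul_cancel₀ (ne_of_gt hspos)]
    · rw [Matrix.mulVec_smul, dotProduct_smul, smul_dotProduct]
      rw [hz_Q]
      simp only [smul_eq_mul]
      rw [← mul_assoc, ← pow_two, hc2, hs]
      field_simp
  exact algConn_le_s6 _ hmem

lemma algConn_Tkld_lt_one (k l d : ℕ) (hk : 2 ≤ k) (hl : 1 ≤ l) (hd : 2 ≤ d) :
    algConn (Tkld k l d) < 1 := by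
  have h := algConn_Tkld_le k l d (by omega) hd
  have hdr : (2 : ℝ) ≤ (d : ℝ) := by exact_mod_cast hd
  have hlr : (1 : ℝ) ≤ (l : ℝ) := by exact_mod_cast hl
  have hkr : (2 : ℝ) ≤ (k : ℝ) := by exact_mod_cast hk
  have hlast : (((k : ℝ) + 1) + ((l : ℝ) + (d : ℝ) - 1)) /
      ((((k : ℝ) + 1)) * ((l : ℝ) + (d : ℝ) - 1)) < 1 := by
    rw [div_lt_one (by nlinarith)]
    nlinarith
  linarith

end Upper

section Star

open Sum

lemma sum_sub_sq {m : ℕ} (f : Fin m → ℝ) (c : ℝ) :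
    ∑ i, (f i - c) ^ 2 = (∑ i, f i ^ 2) - 2 * c * (∑ i, f i) + (m : ℝ) * c ^ 2 := by
  have hpt : ∀ i : Fin m, (f i - c) ^ 2 = f i ^ 2 - 2 * c * f i + c ^ 2 := fun i => by ring
  simp_rw [hpt]
  rw [Finset.sum_add_distrib, Finset.sum_sub_distrib, Finset.sum_const, Finset.card_univ,
    Fintype.card_fin, ← Finset.mul_sum]
  simp only [nsmul_eq_mul]

lemma one_le_algConn_star (k l : ℕ) (hkl : 1 ≤ k + l) : 1 ≤ algConn (Tkld k l 1) := by
  have hcard : 1 < Fintype.card (Fin k ⊕ Fin 1 ⊕ Fin l) := by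
    simp only [Fintype.card_sum, Fintype.card_fin]
    omega
  apply le_algConn _ ⟨_, algConn_mem_QSet _ hcard⟩
  rintro r ⟨x, hs, hn, rfl⟩
  rw [Q_Tkld one_pos]
  have hid0 : (⟨0, one_pos⟩ : Fin 1) = 0 := rfl
  have hid1 : (⟨1 - 1, Nat.sub_lt one_pos one_pos⟩ : Fin 1) = 0 := rfl
  have hmid : ∑ j : Fin 1, (if h : (j : ℕ) + 1 < 1 then
      (x (inr (inl j)) - x (inr (inl ⟨(j : ℕ) + 1, h⟩))) ^ 2 else 0) = 0 :=
    Finset.sum_eq_zero (fun j _ => dif_neg (by omega))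
  rw [hid0, hmid]
  simp only [Fintype.sum_sum_type] at hs hn
  rw [Fin.sum_univ_one] at hs hn
  set cc := x (inr (inl 0)) with hcc
  set SL := ∑ i : Fin k, x (inl i) with hSL
  set SR := ∑ i : Fin l, x (inr (inr i)) with hSR
  rw [hid1]
  rw [sum_sub_sq (fun i => x (inl i)) cc, sum_sub_sq (fun i => x (inr (inr i))) cc]
  have hQL : ∑ i : Fin k, x (inl i) ^ 2 = (∑ i : Fin k, (fun i => x (inl i)) i ^ 2) := rfl
  have hsum : SL + SR = -cc := by linarith
  have hkey : - 2 * cc * SL - 2 * cc * SR = 2 * cc ^ 2 := by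
    have h2 : -2 * cc * (SL + SR) = 2 * cc ^ 2 := by rw [hsum]; ring
    linarith [h2, (by ring : -2 * cc * (SL + SR) = -2 * cc * SL - 2 * cc * SR)]
  have hc2 : 0 ≤ cc ^ 2 := sq_nonneg cc
  have hk2 : 0 ≤ (k : ℝ) * cc ^ 2 := by positivity
  have hl2 : 0 ≤ (l : ℝ) * cc ^ 2 := by positivity
  linarith [hn]

section Mirror

open Sum

def mirrorMap {k l d : ℕ} : (Fin k ⊕ Fin d ⊕ Fin l) → (Fin l ⊕ Fin d ⊕ Fin k) :=
  Sum.elim (fun i => inr (inr i)) (Sum.elim (fun j => inr (inl j.rev)) (fun r => inl r))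

def mirrorEquiv (k l d : ℕ) : (Fin k ⊕ Fin d ⊕ Fin l) ≃ (Fin l ⊕ Fin d ⊕ Fin k) where
  toFun := mirrorMap
  invFun := mirrorMap
  left_inv := by rintro (i | j | r) <;> simp [mirrorMap, Fin.rev_rev]
  right_inv := by rintro (i | j | r) <;> simp [mirrorMap, Fin.rev_rev]

lemma mirror_adj {k l d : ℕ} (a b : Fin k ⊕ Fin d ⊕ Fin l) :
    (Tkld k l d).Adj a b ↔ (Tkld l k d).Adj (mirrorMap a) (mirrorMap b) := by
  rcases a with i | j | r <;> rcases b with i' | j' | r'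
  · exact Iff.rfl
  · simp only [mirrorMap, Sum.elim_inl, Sum.elim_inr, adj_LP, adj_RP, Fin.val_rev]
    have := j'.isLt
    omega
  · exact Iff.rfl
  · simp only [mirrorMap, Sum.elim_inl, Sum.elim_inr, adj_PL, adj_PR, Fin.val_rev]
    have := j.isLt
    omega
  · simp only [mirrorMap, Sum.elim_inl, Sum.elim_inr, adj_PP, Fin.val_rev]
    have := j.isLt
    have := j'.isLt
    omega
  · simp only [mirrorMap, Sum.elim_inl, Sum.elim_inr, adj_PR, adj_PL, Fin.val_rev]
    have := j.isLt
    omega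
  · exact Iff.rfl
  · simp only [mirrorMap, Sum.elim_inl, Sum.elim_inr, adj_RP, adj_LP, Fin.val_rev]
    have := j'.isLt
    omega
  · exact Iff.rfl

lemma QSet_mirror_subset (k l d : ℕ) : QSet (Tkld l k d) ⊆ QSet (Tkld k l d) := by
  rintro r ⟨x, hs, hn, rfl⟩
  set e := mirrorEquiv k l d with he
  refine ⟨fun v => x (e v), ?_, ?_, ?_⟩
  · rw [Equiv.sum_comp e x]
    exact hs
  · rw [Equiv.sum_comp e (fun w => x w ^ 2)]
    exact hn
  · rw [dot_lap_eq_sum_edges, dot_lap_eq_sum_edges]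
    congr 1
    calc ∑ a, ∑ b, (if (Tkld l k d).Adj a b then (x a - x b) ^ 2 else 0)
        = ∑ a, ∑ b, (if (Tkld l k d).Adj (e a) (e b) then (x (e a) - x (e b)) ^ 2 else 0) := by
          rw [← Equiv.sum_comp e
            (fun a => ∑ b, (if (Tkld l k d).Adj a b then (x a - x b) ^ 2 else 0))]
          refine Finset.sum_congr rfl (fun a _ => ?_)
          rw [← Equiv.sum_comp e
            (fun b => (if (Tkld l k d).Adj (e a) b then (x (e a) - x b) ^ 2 else 0))]
      _ = ∑ a, ∑ b, (if (Tkld k l d).Adj a b then (x (e a) - x (e b)) ^ 2 else 0) := by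
          refine Finset.sum_congr rfl (fun a _ => Finset.sum_congr rfl (fun b _ => ?_))
          exact if_congr (mirror_adj a b).symm rfl rfl

lemma algConn_mirror (k l d : ℕ) : algConn (Tkld k l d) = algConn (Tkld l k d) := by
  rw [algConn_eq_sInf, algConn_eq_sInf]
  exact congrArg sInf
    (Set.Subset.antisymm (QSet_mirror_subset l k d) (QSet_mirror_subset k l d))

end Mirror

section Step

open Sum

lemma step_left (k l d : ℕ) (hk : 1 ≤ k) (hl : 1 ≤ l) (hd : 2 ≤ d) :
    algConn (Tkld k l (d + 1)) < algConn (Tkld (k + 1) l d) := by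
  have hd0 : 0 < d := by omega
  have hd0' : 0 < d + 1 := by omega
  have hcard : 1 < Fintype.card (Fin (k + 1) ⊕ Fin d ⊕ Fin l) := by
    simp only [Fintype.card_sum, Fintype.card_fin]
    omega
  obtain ⟨x, hs, hn, he⟩ := exists_fiedler_s6 (Tkld (k + 1) l d) hcard
  set α := algConn (Tkld (k + 1) l d) with hα
  have hαpos : 0 < α := algConn_pos _ hcard (Tkld_preconnected hd0)
  have hα1 : α < 1 := algConn_Tkld_lt_one (k + 1) l d (by omega) hl hd
  set P0 := x (inr (inl ⟨0, hd0⟩)) with hP0def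
  have hpend : ∀ i : Fin (k + 1), (1 - α) * x (inl i) = P0 := by
    intro i
    have h1 := eig_pendL he hd0 i
    rw [← hP0def] at h1
    linarith
  set p := x (inl ⟨0, Nat.succ_pos k⟩) with hpdef
  have hp : ∀ i : Fin (k + 1), x (inl i) = p := by
    intro i
    have h1 := hpend i
    have h2 := hpend ⟨0, Nat.succ_pos k⟩
    have hne : (1 - α) ≠ 0 := by intro h; linarith
    rw [← hpdef] at h2
    exact mul_left_cancel₀ hne (h1.trans h2.symm)
  have hQ1 : dotProduct x (((Tkld (k + 1) l d).lapMatrix ℝ).mulVec x) = α := by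
    rw [he, dot_smul_self, hn, mul_one]
  have hdiff : p - P0 ≠ 0 := by
    intro h0
    have h1 := eig_pendL he hd0 ⟨0, Nat.succ_pos k⟩
    rw [← hpdef, ← hP0def] at h1
    have hp0 : p = 0 := by
      have h2 : α * p = 0 := by rw [h1]; linarith
      exact (mul_eq_zero.mp h2).resolve_left (ne_of_gt hαpos)
    have hP00 : x (inr (inl ⟨0, hd0⟩)) = 0 := by
      rw [← hP0def]; linarith
    have hx0 : x = 0 := propagate_zero hd0 (ne_of_lt hα1) he
      (fun i => (hp i).trans hp0) hP00
    rw [hx0] at hn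
    simpa using hn
  have hsqpos : 0 < (p - P0) ^ 2 := by
    have h1 : (p - P0) ^ 2 ≠ 0 := pow_ne_zero 2 hdiff
    exact lt_of_le_of_ne (sq_nonneg _) (Ne.symm h1)
  -- the transplanted vector on T(k, l, d+1)
  set y : (Fin k ⊕ Fin (d + 1) ⊕ Fin l) → ℝ :=
    Sum.elim (fun _ => p)
      (Sum.elim
        (fun j => if h : (j : ℕ) = 0 then p
          else x (inr (inl ⟨(j : ℕ) - 1, by have := j.isLt; omega⟩)))
        (fun r => x (inr (inr r)))) with hy
  have hyL : ∀ i : Fin k, y (inl i) = p := fun i => rfl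
  have hyR : ∀ r : Fin l, y (inr (inr r)) = x (inr (inr r)) := fun r => rfl
  have hyPval : ∀ j : Fin (d + 1), y (inr (inl j)) =
      if h : (j : ℕ) = 0 then p
      else x (inr (inl ⟨(j : ℕ) - 1, by have := j.isLt; omega⟩)) := fun j => rfl
  have h0eq : (0 : Fin (d + 1)) = ⟨0, hd0'⟩ := Fin.ext (by simp)
  have hyP0 : ∀ (hm : 0 < d + 1), y (inr (inl ⟨0, hm⟩)) = p := by
    intro hm
    rw [hyPval ⟨0, hm⟩, dif_pos rfl]
  have hyPs : ∀ (m : ℕ) (hm : m + 1 < d + 1) (hm' : m < d),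
      y (inr (inl ⟨m + 1, hm⟩)) = x (inr (inl ⟨m, hm'⟩)) := by
    intro m hm hm'
    rw [hyPval ⟨m + 1, hm⟩, dif_neg (Nat.succ_ne_zero m)]
    rfl
  have hsucc : ∀ i : Fin d, (i.succ : Fin (d + 1)) = ⟨(i : ℕ) + 1, by omega⟩ :=
    fun i => Fin.ext (by simp)
  -- sum decompositions
  have hYsum : ∑ j : Fin (d + 1), y (inr (inl j)) = p + ∑ j : Fin d, x (inr (inl j)) := by
    rw [Fin.sum_univ_succ, h0eq, hyP0 hd0']
    refine congrArg (fun s => p + s) (Finset.sum_congr rfl (fun i _ => ?_))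
    rw [hsucc i, hyPs (i : ℕ) (by omega) i.isLt]
  have hYsumsq : ∑ j : Fin (d + 1), y (inr (inl j)) ^ 2
      = p ^ 2 + ∑ j : Fin d, x (inr (inl j)) ^ 2 := by
    rw [Fin.sum_univ_succ, h0eq, hyP0 hd0']
    refine congrArg (fun s => p ^ 2 + s) (Finset.sum_congr rfl (fun i _ => ?_))
    rw [hsucc i, hyPs (i : ℕ) (by omega) i.isLt]
  simp only [Fintype.sum_sum_type] at hs hn
  have hpend_sum : ∑ i : Fin (k + 1), x (inl i) = ((k : ℝ) + 1) * p := by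
    rw [Finset.sum_congr rfl (fun i _ => hp i), Finset.sum_const, Finset.card_univ,
      Fintype.card_fin]
    push_cast
    ring
  have hpend_sumsq : ∑ i : Fin (k + 1), x (inl i) ^ 2 = ((k : ℝ) + 1) * p ^ 2 := by
    rw [Finset.sum_congr rfl (fun i _ => by rw [hp i]), Finset.sum_const, Finset.card_univ,
      Fintype.card_fin]
    push_cast
    ring
  have hys : ∑ v, y v = 0 := by
    simp only [Fintype.sum_sum_type]
    rw [hYsum]
    have h1 : ∑ i : Fin k, y (inl i) = (k : ℝ) * p := by
      rw [Finset.sum_congr rfl (fun i _ => hyL i), Finset.sum_const, Finset.card_univ,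
        Fintype.card_fin]
      simp
    have h2 : ∑ r : Fin l, y (inr (inr r)) = ∑ r : Fin l, x (inr (inr r)) :=
      Finset.sum_congr rfl (fun r _ => hyR r)
    rw [h1, h2]
    rw [hpend_sum] at hs
    linarith
  have hysq : ∑ v, y v ^ 2 = 1 := by
    simp only [Fintype.sum_sum_type]
    rw [hYsumsq]
    have h1 : ∑ i : Fin k, y (inl i) ^ 2 = (k : ℝ) * p ^ 2 := by
      rw [Finset.sum_congr rfl (fun i _ => by rw [hyL i]), Finset.sum_const, Finset.card_univ,
        Fintype.card_fin]
      simp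
    have h2 : ∑ r : Fin l, y (inr (inr r)) ^ 2 = ∑ r : Fin l, x (inr (inr r)) ^ 2 :=
      Finset.sum_congr rfl (fun r _ => by rw [hyR r])
    rw [h1, h2]
    rw [hpend_sumsq] at hn
    linarith
  -- quadratic forms
  have hQ1' := Q_Tkld (k := k + 1) (l := l) hd0 x
  rw [hQ1] at hQ1'
  have hQ2 : dotProduct y (((Tkld k l (d + 1)).lapMatrix ℝ).mulVec y)
      = α - (k : ℝ) * (p - P0) ^ 2 := by
    rw [Q_Tkld hd0' y]
    have hb1 : ∑ i : Fin k, (y (inl i) - y (inr (inl ⟨0, hd0'⟩))) ^ 2 = 0 := by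
      apply Finset.sum_eq_zero
      intro i _
      rw [hyL i, hyP0 hd0']
      ring
    have hb3 : ∑ r : Fin l,
        (y (inr (inr r)) - y (inr (inl ⟨d + 1 - 1, Nat.sub_lt hd0' one_pos⟩))) ^ 2
        = ∑ r : Fin l, (x (inr (inr r)) - x (inr (inl ⟨d - 1, Nat.sub_lt hd0 one_pos⟩))) ^ 2 := by
      refine Finset.sum_congr rfl (fun r _ => ?_)
      rw [hyR r]
      have h1 : (⟨d + 1 - 1, Nat.sub_lt hd0' one_pos⟩ : Fin (d + 1))
          = ⟨(d - 1) + 1, by omega⟩ := Fin.ext (show d + 1 - 1 = d - 1 + 1 by omega)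
      rw [h1, hyPs (d - 1) (by omega) (Nat.sub_lt hd0 one_pos)]
    have hb2 : ∑ j : Fin (d + 1), (if h : (j : ℕ) + 1 < d + 1 then
        (y (inr (inl j)) - y (inr (inl ⟨(j : ℕ) + 1, h⟩))) ^ 2 else 0)
        = (p - P0) ^ 2 + ∑ j : Fin d, (if h : (j : ℕ) + 1 < d then
          (x (inr (inl j)) - x (inr (inl ⟨(j : ℕ) + 1, h⟩))) ^ 2 else 0) := by
      rw [Fin.sum_univ_succ, h0eq]
      have ht0 : (if h : ((⟨0, hd0'⟩ : Fin (d + 1)) : ℕ) + 1 < d + 1 then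
          (y (inr (inl ⟨0, hd0'⟩)) - y (inr (inl ⟨((⟨0, hd0'⟩ : Fin (d + 1)) : ℕ) + 1, h⟩))) ^ 2
          else 0) = (p - P0) ^ 2 := by
        rw [dif_pos (show (0 : ℕ) + 1 < d + 1 by omega)]
        rw [hyP0 hd0', hyPs 0 (by omega) hd0]
      rw [ht0]
      refine congrArg (fun s => (p - P0) ^ 2 + s) (Finset.sum_congr rfl (fun i _ => ?_))
      rw [hsucc i]
      by_cases h1 : (i : ℕ) + 1 < d
      · rw [dif_pos (show ((⟨(i : ℕ) + 1, by omega⟩ : Fin (d + 1)) : ℕ) + 1 < d + 1 by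
          simp; omega)]
        rw [dif_pos h1]
        rw [hyPs (i : ℕ) (by omega) i.isLt]
        have h2 : (⟨((⟨(i : ℕ) + 1, by omega⟩ : Fin (d + 1)) : ℕ) + 1, by simp; omega⟩
            : Fin (d + 1)) = ⟨((i : ℕ) + 1) + 1, by omega⟩ := Fin.ext rfl
        rw [h2, hyPs ((i : ℕ) + 1) (by omega) h1]
      · rw [dif_neg (show ¬ (((⟨(i : ℕ) + 1, by omega⟩ : Fin (d + 1)) : ℕ) + 1 < d + 1) by
          simp; omega)]
        rw [dif_neg h1]
    rw [hb1, hb2, hb3]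
    rw [Q_Tkld (k := k + 1) (l := l) hd0 x] at hQ1
    have hpend1 : ∑ i : Fin (k + 1), (x (inl i) - x (inr (inl ⟨0, hd0⟩))) ^ 2
        = ((k : ℝ) + 1) * (p - P0) ^ 2 := by
      rw [Finset.sum_congr rfl (fun i _ => by rw [hp i, ← hP0def]), Finset.sum_const,
        Finset.card_univ, Fintype.card_fin]
      push_cast
      ring
    rw [hpend1] at hQ1
    linarith
  have hmem : α - (k : ℝ) * (p - P0) ^ 2 ∈ QSet (Tkld k l (d + 1)) := ⟨y, hys, hysq, hQ2.symm⟩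
  have hle := algConn_le_s6 _ hmem
  have hkpos : (0 : ℝ) < (k : ℝ) := by exact_mod_cast hk
  have : 0 < (k : ℝ) * (p - P0) ^ 2 := mul_pos hkpos hsqpos
  linarith

end Step

section Chain

lemma step_right (k l d : ℕ) (hk : 1 ≤ k) (hl : 1 ≤ l) (hd : 2 ≤ d) :
    algConn (Tkld k l (d + 1)) < algConn (Tkld k (l + 1) d) := by
  rw [algConn_mirror k l (d + 1), algConn_mirror k (l + 1) d]
  exact step_left l k d hl hk hd

lemma chain_left : ∀ (a k l d : ℕ), 1 ≤ k → 1 ≤ l → 2 ≤ d →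
    algConn (Tkld k l (d + a + 1)) < algConn (Tkld (k + a + 1) l d) := by
  intro a
  induction a with
  | zero => intro k l d hk hl hd; exact step_left k l d hk hl hd
  | succ a ih =>
    intro k l d hk hl hd
    have hstep := step_left k l (d + a + 1) hk hl (by omega)
    have hih := ih (k + 1) l d (by omega) hl hd
    have he : k + 1 + a + 1 = k + (a + 1) + 1 := by omega
    rw [he] at hih
    exact lt_trans hstep hih

lemma chain_right (a k l d : ℕ) (hk : 1 ≤ k) (hl : 1 ≤ l) (hd : 2 ≤ d) :
    algConn (Tkld k l (d + a + 1)) < algConn (Tkld k (l + a + 1) d) := by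
  rw [algConn_mirror k l (d + a + 1), algConn_mirror k (l + a + 1) d]
  exact chain_left a l k d hl hk hd

lemma chain_both (a b k l d : ℕ) (hk : 1 ≤ k) (hl : 1 ≤ l) (hd : 2 ≤ d) (hab : 1 ≤ a + b) :
    algConn (Tkld k l (d + a + b)) < algConn (Tkld (k + a) (l + b) d) := by
  rcases b with _ | b'
  · rcases a with _ | a'
    · omega
    · exact chain_left a' k l d hk hl hd
  · have h1 := chain_right b' k l (d + a) hk hl (by omega)
    rcases a with _ | a'
    · exact h1
    · have h2 := chain_left a' k (l + b' + 1) d hk (by omega) hd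
      exact lt_trans h1 h2

end Chain

/-- for positive integers `γ₁ < γ₂` and `n ≥ 3γ₂ + 1`,
`α(T_{3γ₁−2}) > α(T_{3γ₂−2})`, where both trees have order `n`. -/
theorem algConn_Td_strict_anti (n γ₁ γ₂ : ℕ) (hγ₁ : 1 ≤ γ₁) (hγ₂ : γ₁ < γ₂)
    (hn : 3 * γ₂ + 1 ≤ n) :
    algConn (Tkld ((n - (3 * γ₁ - 2) + 1) / 2) ((n - (3 * γ₁ - 2)) / 2) (3 * γ₁ - 2)) >
      algConn (Tkld ((n - (3 * γ₂ - 2) + 1) / 2) ((n - (3 * γ₂ - 2)) / 2) (3 * γ₂ - 2)) := by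
  have hd2ge : 4 ≤ 3 * γ₂ - 2 := by omega
  have hk2 : 2 ≤ (n - (3 * γ₂ - 2) + 1) / 2 := by omega
  have hl2 : 1 ≤ (n - (3 * γ₂ - 2)) / 2 := by omega
  rcases eq_or_lt_of_le hγ₁ with h1 | h1
  · -- γ₁ = 1 : star case
    have hγ : γ₁ = 1 := h1.symm
    subst hγ
    have he : 3 * 1 - 2 = 1 := rfl
    rw [he]
    have hupper : algConn (Tkld ((n - (3 * γ₂ - 2) + 1) / 2) ((n - (3 * γ₂ - 2)) / 2)
        (3 * γ₂ - 2)) < 1 :=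
      algConn_Tkld_lt_one _ _ _ hk2 hl2 (by omega)
    have hlower : 1 ≤ algConn (Tkld ((n - 1 + 1) / 2) ((n - 1) / 2) 1) :=
      one_le_algConn_star _ _ (by omega)
    exact lt_of_lt_of_le hupper hlower
  · -- γ₁ ≥ 2
    have hd1ge : 4 ≤ 3 * γ₁ - 2 := by omega
    set d1 := 3 * γ₁ - 2 with hd1
    set d2 := 3 * γ₂ - 2 with hd2
    set k1 := (n - d1 + 1) / 2 with hk1def
    set l1 := (n - d1) / 2 with hl1def
    set k2 := (n - d2 + 1) / 2 with hk2def
    set l2 := (n - d2) / 2 with hl2def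
    set a := k1 - k2 with hadef
    set b := l1 - l2 with hbdef
    have e1 : k1 = k2 + a := by omega
    have e2 : l1 = l2 + b := by omega
    have e3 : d2 = d1 + a + b := by omega
    have hab : 1 ≤ a + b := by omega
    rw [e1, e2, e3]
    exact chain_both a b k2 l2 d1 (by omega) hl2 (by omega) hab
end Star
end

section
/- Let G be a connected graph of order n ≥ 3 with domination number γ(G) = 1. Then α(G) ≥ 1, with equality if and only if G has a cut vertex that is adjacent to all other vertices of G. -/
open Finset

section AuxLemmas

variable {V : Type*} [Fintype V] [DecidableEq V]

lemma aux_quad_eq (G : SimpleGraph V) [DecidableRel G.Adj] (x : V → ℝ) :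
    dotProduct x ((G.lapMatrix ℝ).mulVec x) =
      (∑ i, ∑ j, if G.Adj i j then (x i - x j) ^ 2 else 0) / 2 := by
  rw [← Matrix.toLinearMap₂'_apply', SimpleGraph.lapMatrix_toLinearMap₂']

lemma aux_quad_split (G : SimpleGraph V) [DecidableRel G.Adj]
    (v : V) (hv : ∀ u, u ≠ v → G.Adj v u) (x : V → ℝ) :
    dotProduct x ((G.lapMatrix ℝ).mulVec x) =
      (∑ j ∈ univ.erase v, (x v - x j) ^ 2) +
        (∑ i ∈ univ.erase v, ∑ j ∈ univ.erase v,
          if G.Adj i j then (x i - x j) ^ 2 else 0) / 2 := by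
  rw [aux_quad_eq]
  set f : V → V → ℝ := fun i j => if G.Adj i j then (x i - x j) ^ 2 else 0 with hf
  have step1 : (∑ i, ∑ j, f i j)
      = (∑ j, f v j) + ∑ i ∈ univ.erase v, ∑ j, f i j :=
    (Finset.add_sum_erase univ (fun i => ∑ j, f i j) (mem_univ v)).symm
  have h2 : (∑ j, f v j) = ∑ j ∈ univ.erase v, (x v - x j) ^ 2 := by
    rw [← Finset.add_sum_erase univ (f v) (mem_univ v),
      show f v v = 0 by simp [hf], zero_add]
    exact Finset.sum_congr rfl fun j hj => by
      simp [hf, hv j (mem_erase.mp hj).1]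
  have h3 : ∀ i ∈ univ.erase v,
      (∑ j, f i j) = (x v - x i) ^ 2 + ∑ j ∈ univ.erase v, f i j := by
    intro i hi
    rw [← Finset.add_sum_erase univ (f i) (mem_univ v)]
    congr 1
    have hadj : G.Adj i v := (hv i (mem_erase.mp hi).1).symm
    simp only [hf, if_pos hadj]
    ring
  rw [step1, h2, Finset.sum_congr rfl h3, Finset.sum_add_distrib]
  ring

lemma aux_W_eq (v : V) (x : V → ℝ) (hsum : (∑ u, x u) = 0)
    (hnorm : (∑ u, (x u) ^ 2) = 1) :
    (∑ j ∈ univ.erase v, (x v - x j) ^ 2) = 1 + (Fintype.card V) * (x v) ^ 2 := by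
  rw [Finset.sum_erase (f := fun j => (x v - x j) ^ 2) univ (by simp)]
  have hexp : ∀ j : V, (x v - x j) ^ 2 = x v ^ 2 - 2 * x v * x j + x j ^ 2 :=
    fun j => by ring
  simp_rw [hexp]
  rw [Finset.sum_add_distrib, Finset.sum_sub_distrib, Finset.sum_const, ← Finset.mul_sum,
    hsum, hnorm, card_univ, nsmul_eq_mul]
  ring

lemma aux_sum_two {a b : V} (hab : a ≠ b) (c d : ℝ) (g : ℝ → ℝ) (hg : g 0 = 0) :
    (∑ w, g (if w = a then c else if w = b then d else 0)) = g c + g d := by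
  rw [← Finset.add_sum_erase _ _ (mem_univ a),
    ← Finset.add_sum_erase _ _ (Finset.mem_erase.mpr ⟨hab.symm, mem_univ b⟩),
    if_pos rfl, if_neg hab.symm, if_pos rfl]
  have hz : ∀ w ∈ (univ.erase a).erase b,
      g (if w = a then c else if w = b then d else 0) = 0 := by
    intro w hw
    rw [if_neg (mem_erase.mp (mem_erase.mp hw).2).1, if_neg (mem_erase.mp hw).1, hg]
  rw [Finset.sum_eq_zero hz, add_zero]

lemma aux_sum_split (A : Set V) [DecidablePred (· ∈ A)] (w : V) (c d : ℝ)
    (g : ℝ → ℝ) (hg : g 0 = 0) :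
    (∑ u, g (if u ∈ A then c else if u = w then 0 else d))
      = (univ.filter (· ∈ A)).card * g c
        + (univ.filter (fun u => u ≠ w ∧ u ∉ A)).card * g d := by
  classical
  simp only [apply_ite g, hg]
  rw [Finset.sum_ite, Finset.sum_ite, Finset.filter_filter, Finset.filter_filter,
    Finset.sum_const, Finset.sum_const, Finset.sum_const]
  have hcard : (univ.filter fun u => ¬u ∈ A ∧ ¬u = w)
      = univ.filter (fun u => u ≠ w ∧ u ∉ A) := by
    ext u; simp only [mem_filter, mem_univ, true_and, Ne]; tauto
  rw [hcard]
  simp [nsmul_eq_mul]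

lemma aux_reachable_const {W : Type*} (H : SimpleGraph W) (x : W → ℝ)
    (h : ∀ a b, H.Adj a b → x a = x b) {a b : W} (hr : H.Reachable a b) :
    x a = x b := by
  obtain ⟨w⟩ := hr
  induction w with
  | nil => rfl
  | cons h' p ih => exact (h _ _ h').trans ih

end AuxLemmas

/-- a connected graph `G` of order `n ≥ 3` with domination number `1`
satisfies `α(G) ≥ 1`, with equality iff `G` has a cut vertex adjacent to all other
vertices. -/
theorem algConn_ge_one_of_dominationNumber_one {V : Type*} [Fintype V] [DecidableEq V]
    (G : SimpleGraph V) (hn : 3 ≤ Fintype.card V) (hG : G.Connected)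
    (hdom : dominationNumber G = 1) :
    1 ≤ algConn G ∧
      (algConn G = 1 ↔
        ∃ v : V, ¬ (G.induce {u : V | u ≠ v}).Connected ∧ ∀ u : V, u ≠ v → G.Adj v u) := by
  letI : DecidableRel G.Adj := Classical.decRel G.Adj
  haveI hnt : Nontrivial V := Fintype.one_lt_card_iff_nontrivial.mp (by omega)
  -- extract a universal vertex from the domination hypothesis
  have hDset : dominationNumber G ∈
      {k : ℕ | ∃ S : Finset V, S.card = k ∧ ∀ u ∉ S, ∃ w ∈ S, G.Adj w u} := by
    apply Nat.sInf_mem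
    exact ⟨Fintype.card V, Finset.univ, by simp,
      fun u hu => absurd (Finset.mem_univ u) hu⟩
  rw [hdom] at hDset
  obtain ⟨S, hS1, hSdom⟩ := hDset
  obtain ⟨v, rfl⟩ := Finset.card_eq_one.mp hS1
  have hv : ∀ u, u ≠ v → G.Adj v u := by
    intro u hu
    obtain ⟨w, hw, hadj⟩ := hSdom u (by simpa using hu)
    rw [Finset.mem_singleton] at hw
    rwa [hw] at hadj
  set Q : (V → ℝ) → ℝ := fun x => dotProduct x ((G.lapMatrix ℝ).mulVec x) with hQdef
  set Srq : Set ℝ := {r : ℝ | ∃ x : V → ℝ, (∑ u, x u) = 0 ∧ (∑ u, (x u) ^ 2) = 1 ∧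
      r = Q x} with hSdef
  have halg : algConn G = sInf Srq := rfl
  -- the key decomposition
  have key : ∀ x : V → ℝ, (∑ u, x u) = 0 → (∑ u, (x u) ^ 2) = 1 →
      Q x = 1 + (Fintype.card V) * (x v) ^ 2 +
        (∑ i ∈ univ.erase v, ∑ j ∈ univ.erase v,
          if G.Adj i j then (x i - x j) ^ 2 else 0) / 2 := by
    intro x h1 h2
    rw [hQdef]
    simp only []
    rw [aux_quad_split G v hv x, aux_W_eq v x h1 h2]
  have Rnonneg : ∀ x : V → ℝ, 0 ≤ ∑ i ∈ univ.erase v, ∑ j ∈ univ.erase v,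
      (if G.Adj i j then (x i - x j) ^ 2 else 0) :=
    fun x => Finset.sum_nonneg fun i _ => Finset.sum_nonneg fun j _ => by positivity
  have hlb : ∀ r ∈ Srq, (1 : ℝ) ≤ r := by
    rintro r ⟨x, h1, h2, rfl⟩
    rw [key x h1 h2]
    have hR := Rnonneg x
    have hn0 : (0 : ℝ) ≤ (Fintype.card V) * (x v) ^ 2 := by positivity
    linarith
  -- a point of the constraint set
  obtain ⟨a, b, hab⟩ := exists_pair_ne V
  set s : ℝ := (Real.sqrt 2)⁻¹ with hs
  set x0 : V → ℝ := fun w => if w = a then s else if w = b then -s else 0 with hx0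
  have hx0sum : (∑ u, x0 u) = 0 := by
    rw [show (∑ u, x0 u) = s + -s from aux_sum_two hab s (-s) id rfl]
    ring
  have hs2 : s ^ 2 = 2⁻¹ := by
    rw [hs, inv_pow, Real.sq_sqrt (by norm_num : (0:ℝ) ≤ 2)]
  have hx0norm : (∑ u, (x0 u) ^ 2) = 1 := by
    rw [show (∑ u, (x0 u) ^ 2) = s ^ 2 + (-s) ^ 2 from
      aux_sum_two hab s (-s) (fun t => t ^ 2) (by norm_num)]
    rw [show ((-s : ℝ)) ^ 2 = s ^ 2 by ring, hs2]
    norm_num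
  have hSne : Srq.Nonempty := ⟨Q x0, x0, hx0sum, hx0norm, rfl⟩
  have hbdd : BddBelow Srq := ⟨1, hlb⟩
  have hge : (1 : ℝ) ≤ algConn G := by rw [halg]; exact le_csInf hSne hlb
  refine ⟨hge, ?_, ?_⟩
  · -- forward: algConn G = 1 → exists cut universal vertex
    intro halgeq
    classical
    -- compactness: the minimum is attained
    set K : Set (V → ℝ) := {x | (∑ u, x u) = 0 ∧ (∑ u, (x u) ^ 2) = 1} with hK
    have hc1 : Continuous fun x : V → ℝ => ∑ u, x u :=
      continuous_finset_sum _ fun i _ => continuous_apply i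
    have hc2 : Continuous fun x : V → ℝ => ∑ u, (x u) ^ 2 :=
      continuous_finset_sum _ fun i _ => (continuous_apply i).pow 2
    have hKclosed : IsClosed K :=
      (isClosed_eq hc1 continuous_const).inter (isClosed_eq hc2 continuous_const)
    have hKbound : Bornology.IsBounded K := by
      apply Bornology.IsBounded.subset (Metric.isBounded_closedBall (x := (0 : V → ℝ)) (r := 1))
      rintro x ⟨h1, h2⟩
      rw [Metric.mem_closedBall, dist_zero_right,
        pi_norm_le_iff_of_nonneg (by norm_num : (0:ℝ) ≤ 1)]
      intro i
      have hle : (x i) ^ 2 ≤ 1 := h2 ▸ Finset.single_le_sum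
        (f := fun j => (x j) ^ 2) (fun j _ => sq_nonneg _) (mem_univ i)
      rw [Real.norm_eq_abs]
      nlinarith [abs_nonneg (x i), sq_abs (x i)]
    have hKcomp : IsCompact K := Metric.isCompact_of_isClosed_isBounded hKclosed hKbound
    have hQcont : Continuous Q := by
      show Continuous fun x : V → ℝ => ∑ i, x i * ∑ j, G.lapMatrix ℝ i j * x j
      exact continuous_finset_sum _ fun i _ => (continuous_apply i).mul
        (continuous_finset_sum _ fun j _ => continuous_const.mul (continuous_apply j))
    obtain ⟨xm, hxmK, hxmmin⟩ := hKcomp.exists_isMinOn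
      ⟨x0, hx0sum, hx0norm⟩ hQcont.continuousOn
    have hval : sInf Srq = Q xm := by
      apply le_antisymm
      · exact csInf_le hbdd ⟨xm, hxmK.1, hxmK.2, rfl⟩
      · refine le_csInf hSne ?_
        rintro r ⟨x, h1, h2, rfl⟩
        exact hxmmin (⟨h1, h2⟩ : x ∈ K)
    rw [halg, hval] at halgeq
    have hkey := key xm hxmK.1 hxmK.2
    have hR := Rnonneg xm
    have hn0 : (0 : ℝ) ≤ (Fintype.card V) * (xm v) ^ 2 := by positivity
    have hncard : (3 : ℝ) ≤ (Fintype.card V : ℝ) := by exact_mod_cast hn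
    have hxv : xm v = 0 := by nlinarith [sq_nonneg (xm v)]
    have hRzero : (∑ i ∈ univ.erase v, ∑ j ∈ univ.erase v,
        if G.Adj i j then (xm i - xm j) ^ 2 else 0) = 0 := by
      nlinarith [sq_nonneg (xm v)]
    have hadj_eq : ∀ i j : V, i ≠ v → j ≠ v → G.Adj i j → xm i = xm j := by
      intro i j hi hj hadj
      have hterms := (Finset.sum_eq_zero_iff_of_nonneg
        (fun i _ => Finset.sum_nonneg fun j _ => by positivity)).mp hRzero i
        (mem_erase.mpr ⟨hi, mem_univ i⟩)
      have hterm := (Finset.sum_eq_zero_iff_of_nonneg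
        (fun j _ => by positivity)).mp hterms j (mem_erase.mpr ⟨hj, mem_univ j⟩)
      rw [if_pos hadj] at hterm
      have := pow_eq_zero_iff (n := 2) (by norm_num) |>.mp hterm
      linarith [sub_eq_zero.mp this]
    refine ⟨v, ?_, hv⟩
    intro hconn
    obtain ⟨u0, hu0⟩ := exists_ne v
    have hconst : ∀ j, j ≠ v → xm j = xm u0 := by
      intro j hj
      have hr : (G.induce {u : V | u ≠ v}).Reachable ⟨j, hj⟩ ⟨u0, hu0⟩ :=
        hconn.preconnected _ _
      exact aux_reachable_const _ (fun u : {u : V | u ≠ v} => xm u.1)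
        (fun (p q : {u : V | u ≠ v}) hpq => hadj_eq p.1 q.1 p.2 q.2 hpq) hr
    have hsum0 : (∑ u, xm u) = 0 := hxmK.1
    have hsum1 : (∑ u, xm u) = ((Fintype.card V - 1 : ℕ) : ℝ) * xm u0 := by
      rw [← Finset.add_sum_erase univ xm (mem_univ v), hxv, zero_add,
        Finset.sum_congr rfl (fun j hj => hconst j (mem_erase.mp hj).1),
        Finset.sum_const, Finset.card_erase_of_mem (mem_univ v), card_univ, nsmul_eq_mul]
    have hcardpos : (0 : ℝ) < ((Fintype.card V - 1 : ℕ) : ℝ) := by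
      have : 1 ≤ Fintype.card V - 1 := by omega
      exact_mod_cast Nat.lt_of_lt_of_le Nat.zero_lt_one this
    have hu00 : xm u0 = 0 := by
      have h := hsum1 ▸ hsum0
      rcases mul_eq_zero.mp h with h | h
      · exact absurd h hcardpos.ne'
      · exact h
    have hz : (∑ u, (xm u) ^ 2) = 0 := Finset.sum_eq_zero fun j _ => by
      by_cases hjv : j = v
      · rw [hjv, hxv]; ring
      · rw [hconst j hjv, hu00]; ring
    rw [hxmK.2] at hz
    norm_num at hz
  · -- backward: cut universal vertex → algConn G = 1
    rintro ⟨w, hdis, hwu⟩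
    refine le_antisymm ?_ hge
    rw [halg]
    classical
    have hne2 : Nonempty {u : V | u ≠ w} := by
      obtain ⟨u, hu⟩ := exists_ne w
      exact ⟨⟨u, hu⟩⟩
    have hpre : ¬ (G.induce {u : V | u ≠ w}).Preconnected := by
      intro h
      haveI := hne2
      exact hdis ⟨h⟩
    rw [SimpleGraph.Preconnected] at hpre
    push_neg at hpre
    obtain ⟨a', b', hnr⟩ := hpre
    set A : Set V := {u : V | ∃ h : u ≠ w,
      (G.induce {u : V | u ≠ w}).Reachable a' ⟨u, h⟩} with hA
    have haA : a'.1 ∈ A := ⟨a'.2, by rw [show (⟨a'.1, a'.2⟩ : {u : V | u ≠ w}) = a' from rfl]⟩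
    have hbA : b'.1 ∉ A := by
      rintro ⟨h, hr⟩
      exact hnr (by rwa [show (⟨b'.1, h⟩ : {u : V | u ≠ w}) = b' from Subtype.ext rfl] at hr)
    have hwA : w ∉ A := fun ⟨h, _⟩ => h rfl
    have hclosed : ∀ i j : V, i ≠ w → j ≠ w → G.Adj i j → (i ∈ A ↔ j ∈ A) := by
      intro i j hi hj hadj
      constructor
      · rintro ⟨h, hr⟩
        exact ⟨hj, hr.trans (SimpleGraph.Adj.reachable
          (show (G.induce {u : V | u ≠ w}).Adj ⟨i, hi⟩ ⟨j, hj⟩ from hadj))⟩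
      · rintro ⟨h, hr⟩
        exact ⟨hi, hr.trans (SimpleGraph.Adj.reachable
          (show (G.induce {u : V | u ≠ w}).Adj ⟨j, hj⟩ ⟨i, hi⟩ from hadj.symm))⟩
    set p : ℕ := (univ.filter (· ∈ A)).card with hp
    set q : ℕ := (univ.filter (fun u => u ≠ w ∧ u ∉ A)).card with hq
    have hp1 : 1 ≤ p := Finset.card_pos.mpr
      ⟨a'.1, Finset.mem_filter.mpr ⟨mem_univ _, haA⟩⟩
    have hq1 : 1 ≤ q := Finset.card_pos.mpr
      ⟨b'.1, Finset.mem_filter.mpr ⟨mem_univ _, b'.2, hbA⟩⟩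
    have hp0 : (0 : ℝ) < p := by exact_mod_cast hp1
    have hq0 : (0 : ℝ) < q := by exact_mod_cast hq1
    set y : V → ℝ := fun u => if u ∈ A then (q : ℝ) else if u = w then 0 else -(p : ℝ)
      with hy
    have hysum : (∑ u, y u) = 0 := by
      rw [show (∑ u, y u) = p * (q : ℝ) + q * (-(p : ℝ)) from
        aux_sum_split A w (q : ℝ) (-(p : ℝ)) id rfl]
      ring
    set N : ℝ := p * (q : ℝ) ^ 2 + q * (p : ℝ) ^ 2 with hN
    have hynorm : (∑ u, (y u) ^ 2) = N := by
      rw [show (∑ u, (y u) ^ 2) = p * (q : ℝ) ^ 2 + q * (-(p : ℝ)) ^ 2 from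
        aux_sum_split A w (q : ℝ) (-(p : ℝ)) (fun t => t ^ 2) (by norm_num)]
      rw [hN]; ring
    have hNpos : 0 < N := by
      have h1 := mul_pos hp0 (pow_pos hq0 2)
      have h2 := mul_pos hq0 (pow_pos hp0 2)
      rw [hN]; linarith
    have hyw : y w = 0 := by rw [hy]; simp [hwA]
    have hQy : Q y = N := by
      rw [hQdef]
      simp only []
      rw [aux_quad_split G w hwu y]
      have hRz : (∑ i ∈ univ.erase w, ∑ j ∈ univ.erase w,
          if G.Adj i j then (y i - y j) ^ 2 else 0) = 0 := by
        apply Finset.sum_eq_zero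
        intro i hi
        apply Finset.sum_eq_zero
        intro j hj
        by_cases hadj : G.Adj i j
        · rw [if_pos hadj]
          have hi' := (mem_erase.mp hi).1
          have hj' := (mem_erase.mp hj).1
          have hiff := hclosed i j hi' hj' hadj
          by_cases hiA : i ∈ A
          · have hjA : j ∈ A := hiff.mp hiA
            rw [hy]; simp [hiA, hjA]
          · have hjA : j ∉ A := fun h => hiA (hiff.mpr h)
            rw [hy]; simp [hiA, hjA, hi', hj']
        · rw [if_neg hadj]
      rw [hRz]
      have hW : (∑ j ∈ univ.erase w, (y w - y j) ^ 2) = ∑ u, (y u) ^ 2 := by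
        rw [Finset.sum_erase (f := fun j => (y w - y j) ^ 2) univ (by simp)]
        exact Finset.sum_congr rfl fun j _ => by rw [hyw]; ring
      rw [hW, hynorm]
      ring
    set t : ℝ := (Real.sqrt N)⁻¹ with ht
    have ht2 : t ^ 2 = N⁻¹ := by
      rw [ht, inv_pow, Real.sq_sqrt hNpos.le]
    set x1 : V → ℝ := fun u => t * y u with hx1
    have hx1sum : (∑ u, x1 u) = 0 := by
      rw [hx1]
      simp only []
      rw [← Finset.mul_sum, hysum, mul_zero]
    have hx1norm : (∑ u, (x1 u) ^ 2) = 1 := by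
      rw [hx1]
      simp only []
      simp_rw [mul_pow]
      rw [← Finset.mul_sum, hynorm, ht2, inv_mul_cancel₀ hNpos.ne']
    have hQx1 : Q x1 = 1 := by
      have hsmul : x1 = t • y := rfl
      rw [hQdef]
      simp only []
      rw [hsmul, Matrix.mulVec_smul, dotProduct_smul, smul_dotProduct]
      have : dotProduct y ((G.lapMatrix ℝ).mulVec y) = N := hQy
      rw [smul_eq_mul, smul_eq_mul, this, ← mul_assoc, ← pow_two, ht2,
        inv_mul_cancel₀ hNpos.ne']
    exact csInf_le hbdd ⟨x1, hx1sum, hx1norm, hQx1.symm⟩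
end
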